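/- arXiv:1101.1539 — 4 statements merged into one kernel-verified Lean document; each statement's English description precedes it below -/
import Mathlib

section
/- Let G₀ ⊆ ℝ² be a finite set and let Co(ℝ², G₀) be the convex geometry on G₀ with closure τ(Z) = (convexHull ℝ Z) ∩ G₀. Let (G, cl) be a finite convex geometry that is a sub-geometry of Co(ℝ², G₀). Then for all x, y, a, b, c ∈ G: if y ∈ cl({a,b,c}); cl({y}) ∩ cl({a,b}) = ∅, cl({y}) ∩ cl({b,c}) = ∅, cl({y}) ∩ cl({a,c}) = ∅, cl({y}) ∩ cl({x}) = ∅; x ∈ cl({y,a,b}); and x ∈ cl({y,a,c}); then cl({x}) ∩ cl({y,a}) ≠ ∅. -/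
/-- A convex geometry: a closure operator on subsets of `A` (extensive, monotone,
idempotent, valued in subsets of `A`) which is zero-closed and satisfies the
anti-exchange axiom. -/
def IsConvexGeometry {α : Type*} (A : Set α) (cl : Set α → Set α) : Prop :=
  (∀ Y : Set α, Y ⊆ A → Y ⊆ cl Y) ∧
  (∀ Y : Set α, Y ⊆ A → cl Y ⊆ A) ∧
  (∀ Y Z : Set α, Y ⊆ Z → Z ⊆ A → cl Y ⊆ cl Z) ∧
  (∀ Y : Set α, Y ⊆ A → cl (cl Y) = cl Y) ∧
  cl ∅ = ∅ ∧
  (∀ x ∈ A, ∀ y ∈ A, x ≠ y → ∀ X : Set α, X ⊆ A → cl X = X →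
    x ∈ cl (X ∪ {y}) → x ∉ X → y ∉ cl (X ∪ {x}))

/-- `(A, clG)` is a sub-geometry of `(B, clH)`: there is an injective map `φ` from
`clG`-closed subsets of `A` to `clH`-closed subsets of `B` preserving intersections
and closures of unions. -/
def IsSubGeometry {α β : Type*} (A : Set α) (clG : Set α → Set α)
    (B : Set β) (clH : Set β → Set β) : Prop :=
  ∃ φ : Set α → Set β,
    (∀ X : Set α, X ⊆ A → clG X = X → φ X ⊆ B ∧ clH (φ X) = φ X) ∧
    (∀ X Y : Set α, X ⊆ A → clG X = X → Y ⊆ A → clG Y = Y → φ X = φ Y → X = Y) ∧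
    (∀ X Y : Set α, X ⊆ A → clG X = X → Y ⊆ A → clG Y = Y →
      φ (X ∩ Y) = φ X ∩ φ Y) ∧
    (∀ X Y : Set α, X ⊆ A → clG X = X → Y ⊆ A → clG Y = Y →
      φ (clG (X ∪ Y)) = clH (φ X ∪ φ Y))

open Set

namespace Stmt9Geo


abbrev E2 := Fin 2 → ℝ

variable (q p : E2)

/-- signed-area coordinate: vanishes on the line through `q` and `p`. -/
def xi (z : E2) : ℝ := (q 0 - p 0) * (z 1 - q 1) - (q 1 - p 1) * (z 0 - q 0)

/-- coordinate along the line through `q` and `p`, zero at `q`, negative at `p`. -/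
def up (z : E2) : ℝ := (q 0 - p 0) * (z 0 - q 0) + (q 1 - p 1) * (z 1 - q 1)

lemma xi_affine (a b : ℝ) (hab : a + b = 1) (u v : E2) :
    xi q p (a • u + b • v) = a * xi q p u + b * xi q p v := by
  have hb : b = 1 - a := by linarith
  subst hb
  simp only [xi, Pi.add_apply, Pi.smul_apply, smul_eq_mul]
  ring

lemma up_affine (a b : ℝ) (hab : a + b = 1) (u v : E2) :
    up q p (a • u + b • v) = a * up q p u + b * up q p v := by
  have hb : b = 1 - a := by linarith
  subst hb
  simp only [up, Pi.add_apply, Pi.smul_apply, smul_eq_mul]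
  ring

lemma xi_q : xi q p q = 0 := by simp [xi]

lemma up_q : up q p q = 0 := by simp [up]

lemma up_p : up q p p = -(((q 0 - p 0)^2 + (q 1 - p 1)^2)) := by
  simp only [up]; ring

lemma nsq_pos (hqp : q ≠ p) : 0 < (q 0 - p 0)^2 + (q 1 - p 1)^2 := by
  rcases eq_or_ne (q 0) (p 0) with h0 | h0
  · rcases eq_or_ne (q 1) (p 1) with h1 | h1
    · exfalso; apply hqp; funext i; fin_cases i <;> assumption
    · have : (q 1 - p 1) ≠ 0 := sub_ne_zero.2 h1
      have h2 : 0 < (q 1 - p 1)^2 := by positivity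
      nlinarith [sq_nonneg (q 0 - p 0)]
  · have : (q 0 - p 0) ≠ 0 := sub_ne_zero.2 h0
    have h2 : 0 < (q 0 - p 0)^2 := by positivity
    nlinarith [sq_nonneg (q 1 - p 1)]

/-- a point on the line is `q + t • (q - p)` with `t` read off from `up`. -/
lemma line_eq (hqp : q ≠ p) {z : E2} (h0 : xi q p z = 0) :
    z = q + ((up q p z) / ((q 0 - p 0)^2 + (q 1 - p 1)^2)) • (q - p) := by
  have hn := nsq_pos q p hqp
  have hn' : (q 0 - p 0)^2 + (q 1 - p 1)^2 ≠ 0 := ne_of_gt hn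
  have h0' : (q 0 - p 0) * (z 1 - q 1) - (q 1 - p 1) * (z 0 - q 0) = 0 := h0
  funext i
  fin_cases i
  · simp only [up, Pi.add_apply, Pi.smul_apply, Pi.sub_apply, smul_eq_mul, Fin.zero_eta, Fin.isValue]
    field_simp
    linear_combination (-(q 1 - p 1)) * h0'
  · simp only [up, Pi.add_apply, Pi.smul_apply, Pi.sub_apply, smul_eq_mul, Fin.mk_one, Fin.isValue]
    field_simp
    linear_combination (q 0 - p 0) * h0'


/-- if `z` is on the ray from `p` through `q` beyond `q`, then `q ∈ [z, p]`. -/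
lemma mem_segment_zp (hqp : q ≠ p) {z : E2} (h0 : xi q p z = 0) (hu : 0 ≤ up q p z) :
    q ∈ segment ℝ z p := by
  have hn := nsq_pos q p hqp
  set t : ℝ := up q p z / ((q 0 - p 0)^2 + (q 1 - p 1)^2) with ht
  have htn : 0 ≤ t := div_nonneg hu (le_of_lt hn)
  have hz : z = q + t • (q - p) := line_eq q p hqp h0
  clear_value t
  have h1t : (0:ℝ) < 1 + t := by linarith
  refine ⟨1/(1+t), t/(1+t), by positivity, by positivity, by field_simp, ?_⟩
  rw [hz]
  funext i
  simp only [Pi.add_apply, Pi.smul_apply, Pi.sub_apply, smul_eq_mul]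
  field_simp
  ring

/-- if `z₁, z₂` are on the line with `υ z₁ < 0 < υ z₂` then `q ∈ [z₁, z₂]`. -/
lemma mem_segment_sandwich (hqp : q ≠ p) {z1 z2 : E2} (h1 : xi q p z1 = 0)
    (h2 : xi q p z2 = 0) (hu1 : up q p z1 < 0) (hu2 : 0 < up q p z2) :
    q ∈ segment ℝ z1 z2 := by
  have hn := nsq_pos q p hqp
  set N : ℝ := (q 0 - p 0)^2 + (q 1 - p 1)^2 with hN
  set t1 : ℝ := up q p z1 / N with ht1
  set t2 : ℝ := up q p z2 / N with ht2
  have htn1 : t1 < 0 := div_neg_of_neg_of_pos hu1 hn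
  have htn2 : 0 < t2 := div_pos hu2 hn
  have hz1 : z1 = q + t1 • (q - p) := line_eq q p hqp h1
  have hz2 : z2 = q + t2 • (q - p) := line_eq q p hqp h2
  clear_value t1 t2
  have hd : 0 < t2 - t1 := by linarith
  refine ⟨t2/(t2-t1), -t1/(t2-t1), by positivity,
    div_nonneg (by linarith) (le_of_lt hd), by field_simp; ring, ?_⟩
  rw [hz1, hz2]
  funext i
  simp only [Pi.add_apply, Pi.smul_apply, Pi.sub_apply, smul_eq_mul]
  field_simp
  ring

lemma eq_q_of (hqp : q ≠ p) {z : E2} (h0 : xi q p z = 0) (hu : up q p z = 0) : z = q := by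
  have hz := line_eq q p hqp h0
  rw [hu] at hz
  simpa [zero_div, zero_smul] using hz

/-- crossing point of a segment with the line, with values of any affine functional. -/
lemma cross_lemma {u v : E2} (hu : xi q p u < 0) (hv : 0 < xi q p v) :
    ∃ z ∈ segment ℝ u v, xi q p z = 0 ∧
      ∀ g : E2 → ℝ, (∀ (a b : ℝ), a + b = 1 → ∀ u' v' : E2, g (a • u' + b • v') = a * g u' + b * g v') →
      (xi q p v - xi q p u) * g z = xi q p v * g u - xi q p u * g v := by
  have hd : 0 < xi q p v - xi q p u := by linarith
  have hd' : xi q p v - xi q p u ≠ 0 := ne_of_gt hd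
  have ha0 : 0 ≤ xi q p v / (xi q p v - xi q p u) := by positivity
  have ha1 : xi q p v / (xi q p v - xi q p u) ≤ 1 := by
    rw [div_le_one hd]; linarith
  refine ⟨(xi q p v / (xi q p v - xi q p u)) • u + (1 - xi q p v / (xi q p v - xi q p u)) • v,
    ⟨_, _, ha0, by linarith, by ring, rfl⟩, ?_, ?_⟩
  · rw [xi_affine q p _ _ (by ring)]
    field_simp
    ring
  · intro g hg
    rw [hg _ _ (by ring) u v]
    field_simp
    ring

set_option maxHeartbeats 1000000 in
theorem geom_main (Y A B C : Set E2) (hYf : Y.Finite) (hAf : A.Finite)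
    (q p : E2)
    (hq1 : q ∈ convexHull ℝ (A ∪ B ∪ C))
    (hq2 : q ∉ convexHull ℝ (B ∪ C))
    (hqK : q ∈ convexHull ℝ (Y ∪ A))
    (hp1 : p ∈ convexHull ℝ (Y ∪ A ∪ B))
    (hp2 : p ∈ convexHull ℝ (Y ∪ A ∪ C))
    (hp3 : p ∉ convexHull ℝ (Y ∪ A)) :
    q ∈ convexHull ℝ (A ∪ B ∪ {p}) ∨ q ∈ convexHull ℝ (A ∪ C ∪ {p}) := by
  by_contra hcon
  push_neg at hcon
  obtain ⟨hF, hG⟩ := hcon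
  have hqp : q ≠ p := by rintro rfl; exact hp3 hqK
  -- small arithmetic helpers
  have posfac : ∀ a b : ℝ, 0 < a → 0 < a * b → 0 < b := by
    intro a b ha hab
    by_contra hcon'
    push_neg at hcon'
    have := mul_le_mul_of_nonneg_left hcon' ha.le
    rw [mul_zero] at this
    linarith
  have negfac : ∀ a b : ℝ, 0 < a → a * b < 0 → b < 0 := by
    intro a b ha hab
    by_contra hcon'
    push_neg at hcon'
    have := mul_le_mul_of_nonneg_left hcon' ha.le
    rw [mul_zero] at this
    linarith
  have hYAne : (Y ∪ A).Nonempty := by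
    rcases (Y ∪ A).eq_empty_or_nonempty with h | h
    · rw [h, convexHull_empty] at hqK; exact absurd hqK (notMem_empty q)
    · exact h
  have hBne : B.Nonempty := by
    rcases B.eq_empty_or_nonempty with h | h
    · rw [h, union_empty] at hp1; exact absurd hp1 hp3
    · exact h
  have hCne : C.Nonempty := by
    rcases C.eq_empty_or_nonempty with h | h
    · rw [h, union_empty] at hp2; exact absurd hp2 hp3
    · exact h
  have hAne : A.Nonempty := by
    rcases A.eq_empty_or_nonempty with h | h
    · rw [h, empty_union] at hq1; exact absurd hq1 hq2
    · exact h
  have hA_AB : convexHull ℝ A ⊆ convexHull ℝ (A ∪ B) := convexHull_mono subset_union_left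
  have hB_AB : convexHull ℝ B ⊆ convexHull ℝ (A ∪ B) := convexHull_mono subset_union_right
  have hA_AC : convexHull ℝ A ⊆ convexHull ℝ (A ∪ C) := convexHull_mono subset_union_left
  have hC_AC : convexHull ℝ C ⊆ convexHull ℝ (A ∪ C) := convexHull_mono subset_union_right
  have hB_BC : convexHull ℝ B ⊆ convexHull ℝ (B ∪ C) := convexHull_mono subset_union_left
  have hC_BC : convexHull ℝ C ⊆ convexHull ℝ (B ∪ C) := convexHull_mono subset_union_right
  -- separating functional for p and conv(Y ∪ A)
  obtain ⟨f, u, hfK, hfp⟩ := geometric_hahn_banach_closed_point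
    (convex_convexHull ℝ (Y ∪ A)) (((hYf.union hAf).isCompact_convexHull ℝ).isClosed) hp3
  have hfq : f q < u := hfK q hqK
  have haff_f : ∀ (a b : ℝ), a + b = 1 → ∀ u' v' : E2, f (a • u' + b • v') = a * f u' + b * f v' := by
    intro a b _ u' v'
    rw [map_add, map_smul, map_smul]
    simp [smul_eq_mul]
  have hfray : ∀ z : E2, xi q p z = 0 → 0 ≤ up q p z → f z < f p := by
    intro z h0 hu0
    have hn := nsq_pos q p hqp
    set t : ℝ := up q p z / ((q 0 - p 0)^2 + (q 1 - p 1)^2) with ht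
    have htn : 0 ≤ t := div_nonneg hu0 hn.le
    have hz : z = q + t • (q - p) := line_eq q p hqp h0
    have hfz : f z = f q + t * (f q - f p) := by
      rw [hz, map_add, map_smul, map_sub]
      simp [smul_eq_mul]
    have hneg : f q - f p ≤ 0 := by linarith
    have h5 : t * (f q - f p) ≤ 0 := by
      have := mul_le_mul_of_nonneg_left hneg htn
      rw [mul_zero] at this
      exact this
    linarith
  -- exclusion lemmas
  have exAB : ∀ z : E2, xi q p z = 0 → z ∈ convexHull ℝ (A ∪ B) → up q p z < 0 := by
    intro z h0 hz
    by_contra hge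
    push_neg at hge
    refine hF ?_
    have hqseg := mem_segment_zp q p hqp h0 hge
    have hsub : segment ℝ z p ⊆ convexHull ℝ (A ∪ B ∪ {p}) := by
      refine (convex_convexHull ℝ _).segment_subset ?_ ?_
      · exact convexHull_mono subset_union_left hz
      · exact subset_convexHull ℝ _ (by simp)
    exact hsub hqseg
  have exAC : ∀ z : E2, xi q p z = 0 → z ∈ convexHull ℝ (A ∪ C) → up q p z < 0 := by
    intro z h0 hz
    by_contra hge
    push_neg at hge
    refine hG ?_
    have hqseg := mem_segment_zp q p hqp h0 hge
    have hsub : segment ℝ z p ⊆ convexHull ℝ (A ∪ C ∪ {p}) := by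
      refine (convex_convexHull ℝ _).segment_subset ?_ ?_
      · exact convexHull_mono subset_union_left hz
      · exact subset_convexHull ℝ _ (by simp)
    exact hsub hqseg
  -- crossing with a "negative" hull
  have crossNeg : ∀ (S : Set E2), (∀ z : E2, xi q p z = 0 → z ∈ convexHull ℝ S → up q p z < 0) →
      ∀ u' v' : E2, u' ∈ convexHull ℝ S → v' ∈ convexHull ℝ S → xi q p u' < 0 → 0 < xi q p v' →
      xi q p v' * up q p u' - xi q p u' * up q p v' < 0 := by
    intro S hS u' v' hu hv hxu hxv
    obtain ⟨z, hseg, h0, hrel⟩ := cross_lemma q p hxu hxv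
    have hmem : z ∈ convexHull ℝ S := (convex_convexHull ℝ _).segment_subset hu hv hseg
    have hup := hS z h0 hmem
    have hd : 0 < xi q p v' - xi q p u' := by linarith
    have hr := hrel (up q p) (up_affine q p)
    calc xi q p v' * up q p u' - xi q p u' * up q p v'
        = (xi q p v' - xi q p u') * up q p z := hr.symm
      _ < 0 := mul_neg_of_pos_of_neg hd hup
  have mkzp : ∀ u' v' : E2, u' ∈ convexHull ℝ (B ∪ C) → v' ∈ convexHull ℝ (B ∪ C) →
      xi q p u' < 0 → 0 < xi q p v' → 0 < xi q p v' * up q p u' - xi q p u' * up q p v' →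
      ∃ z : E2, z ∈ convexHull ℝ (B ∪ C) ∧ xi q p z = 0 ∧ 0 < up q p z := by
    intro u' v' hu hv hxu hxv hpos
    obtain ⟨z, hseg, h0, hrel⟩ := cross_lemma q p hxu hxv
    have hmem : z ∈ convexHull ℝ (B ∪ C) := (convex_convexHull ℝ _).segment_subset hu hv hseg
    have hd : 0 < xi q p v' - xi q p u' := by linarith
    refine ⟨z, hmem, h0, ?_⟩
    have hr := hrel (up q p) (up_affine q p)
    refine posfac _ _ hd ?_
    rw [hr]
    exact hpos
  -- p-side witnesses
  have hp1' : p ∈ convexJoin ℝ (convexHull ℝ (Y ∪ A)) (convexHull ℝ B) := by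
    rw [← convexHull_union hYAne hBne]; exact hp1
  obtain ⟨r, hr, bt, hbt, hsegB⟩ := mem_convexJoin.1 hp1'
  obtain ⟨e1, e2, he1, he2, he12, hpeqB⟩ := hsegB
  have he2pos : 0 < e2 := by
    rcases he2.lt_or_eq with h | h
    · exact h
    · exfalso
      apply hp3
      have h1 : e1 = 1 := by linarith
      have hpr : p = r := by rw [← hpeqB, ← h, h1]; simp
      rw [hpr]; exact hr
  have hfbt : f p ≤ f bt := by
    have hfr : f r < f p := lt_trans (hfK r hr) hfp
    have hfeq : f p = e1 * f r + e2 * f bt := by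
      rw [← hpeqB, map_add, map_smul, map_smul]; simp [smul_eq_mul]
    by_contra hlt
    push_neg at hlt
    have h1 : e1 * f r ≤ e1 * f p := mul_le_mul_of_nonneg_left hfr.le he1
    have h2 : e2 * f bt < e2 * f p := (mul_lt_mul_iff_right₀ he2pos).2 hlt
    have h3 : e1 * f p + e2 * f p = f p := by rw [← add_mul, he12, one_mul]
    linarith
  have hp2' : p ∈ convexJoin ℝ (convexHull ℝ (Y ∪ A)) (convexHull ℝ C) := by
    rw [← convexHull_union hYAne hCne]; exact hp2
  obtain ⟨r2, hr2, ct, hct, hsegC⟩ := mem_convexJoin.1 hp2'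
  obtain ⟨d1, d2, hd1, hd2, hd12, hpeqC⟩ := hsegC
  have hd2pos : 0 < d2 := by
    rcases hd2.lt_or_eq with h | h
    · exact h
    · exfalso
      apply hp3
      have h1 : d1 = 1 := by linarith
      have hpr : p = r2 := by rw [← hpeqC, ← h, h1]; simp
      rw [hpr]; exact hr2
  have hfct : f p ≤ f ct := by
    have hfr : f r2 < f p := lt_trans (hfK r2 hr2) hfp
    have hfeq : f p = d1 * f r2 + d2 * f ct := by
      rw [← hpeqC, map_add, map_smul, map_smul]; simp [smul_eq_mul]
    by_contra hlt
    push_neg at hlt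
    have h1 : d1 * f r2 ≤ d1 * f p := mul_le_mul_of_nonneg_left hfr.le hd1
    have h2 : d2 * f ct < d2 * f p := (mul_lt_mul_iff_right₀ hd2pos).2 hlt
    have h3 : d1 * f p + d2 * f p = f p := by rw [← add_mul, hd12, one_mul]
    linarith
  have hbtBC : bt ∈ convexHull ℝ (B ∪ C) := hB_BC hbt
  have hctBC : ct ∈ convexHull ℝ (B ∪ C) := hC_BC hct
  -- q-side centrality decomposition
  have hBCne : (B ∪ C).Nonempty := hBne.mono subset_union_left
  have hq1' : q ∈ convexJoin ℝ (convexHull ℝ A) (convexHull ℝ (B ∪ C)) := by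
    rw [← convexHull_union hAne hBCne, ← union_assoc]; exact hq1
  obtain ⟨ab, hab, w, hw, hsegq⟩ := mem_convexJoin.1 hq1'
  obtain ⟨l1, l2, hl1, hl2, hl12, hqeq⟩ := hsegq
  have hw' : w ∈ convexJoin ℝ (convexHull ℝ B) (convexHull ℝ C) := by
    rw [← convexHull_union hBne hCne]; exact hw
  obtain ⟨bh, hbh, ch, hch, hsegw⟩ := mem_convexJoin.1 hw'
  obtain ⟨s1, s2, hs1, hs2, hs12, hweq⟩ := hsegw
  have habAB : ab ∈ convexHull ℝ (A ∪ B) := hA_AB hab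
  have habAC : ab ∈ convexHull ℝ (A ∪ C) := hA_AC hab
  have hbhAB : bh ∈ convexHull ℝ (A ∪ B) := hB_AB hbh
  have hbhBC : bh ∈ convexHull ℝ (B ∪ C) := hB_BC hbh
  have hchAC : ch ∈ convexHull ℝ (A ∪ C) := hC_AC hch
  have hchBC : ch ∈ convexHull ℝ (B ∪ C) := hC_BC hch
  -- weight positivity
  have hl1pos : 0 < l1 := by
    rcases hl1.lt_or_eq with h | h
    · exact h
    · exfalso
      apply hq2
      have h2 : l2 = 1 := by linarith
      have hqw : q = w := by rw [← hqeq, ← h, h2]; simp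
      rw [hqw]; exact hw
  have hl2pos : 0 < l2 := by
    rcases hl2.lt_or_eq with h | h
    · exact h
    · exfalso
      apply hF
      have h1 : l1 = 1 := by linarith
      have hqab : q = ab := by rw [← hqeq, ← h, h1]; simp
      rw [hqab]
      exact convexHull_mono (subset_union_left.trans subset_union_left) hab
  have hs1pos : 0 < s1 := by
    rcases hs1.lt_or_eq with h | h
    · exact h
    · exfalso
      apply hG
      have h2 : s2 = 1 := by linarith
      have hwch : w = ch := by rw [← hweq, ← h, h2]; simp
      have hqmem : q ∈ segment ℝ ab ch := ⟨l1, l2, hl1, hl2, hl12, by rw [← hwch]; exact hqeq⟩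
      have hsub : segment ℝ ab ch ⊆ convexHull ℝ (A ∪ C ∪ {p}) :=
        (convex_convexHull ℝ _).segment_subset
          (convexHull_mono (subset_union_left.trans subset_union_left) hab)
          (convexHull_mono (subset_union_right.trans subset_union_left) hch)
      exact hsub hqmem
  have hs2pos : 0 < s2 := by
    rcases hs2.lt_or_eq with h | h
    · exact h
    · exfalso
      apply hF
      have h2 : s1 = 1 := by linarith
      have hwbh : w = bh := by rw [← hweq, ← h, h2]; simp
      have hqmem : q ∈ segment ℝ ab bh := ⟨l1, l2, hl1, hl2, hl12, by rw [← hwbh]; exact hqeq⟩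
      have hsub : segment ℝ ab bh ⊆ convexHull ℝ (A ∪ B ∪ {p}) :=
        (convex_convexHull ℝ _).segment_subset
          (convexHull_mono (subset_union_left.trans subset_union_left) hab)
          (convexHull_mono (subset_union_right.trans subset_union_left) hbh)
      exact hsub hqmem
  have hβpos : 0 < l2 * s1 := mul_pos hl2pos hs1pos
  have hγpos : 0 < l2 * s2 := mul_pos hl2pos hs2pos
  -- scalar equations
  have hxw : xi q p w = s1 * xi q p bh + s2 * xi q p ch := by
    have h2 := xi_affine q p s1 s2 hs12 bh ch
    rw [hweq] at h2
    exact h2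
  have huw : up q p w = s1 * up q p bh + s2 * up q p ch := by
    have h2 := up_affine q p s1 s2 hs12 bh ch
    rw [hweq] at h2
    exact h2
  have hxE : l1 * xi q p ab + (l2 * s1) * xi q p bh + (l2 * s2) * xi q p ch = 0 := by
    have h1 := xi_affine q p l1 l2 hl12 ab w
    rw [hqeq] at h1
    have h3 := xi_q q p
    linear_combination -h1 - l2 * hxw + h3
  have huE : l1 * up q p ab + (l2 * s1) * up q p bh + (l2 * s2) * up q p ch = 0 := by
    have h1 := up_affine q p l1 l2 hl12 ab w
    rw [hqeq] at h1
    have h3 := up_q q p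
    linear_combination -h1 - l2 * huw + h3
  have keyA : (l2*s1) * (xi q p bh * up q p ab - xi q p ab * up q p bh)
      + (l2*s2) * (xi q p ch * up q p ab - xi q p ab * up q p ch) = 0 := by
    linear_combination (up q p ab) * hxE - (xi q p ab) * huE
  have keyB : l1 * (xi q p ab * up q p bh - xi q p bh * up q p ab)
      + (l2*s2) * (xi q p ch * up q p bh - xi q p bh * up q p ch) = 0 := by
    linear_combination (up q p bh) * hxE - (xi q p bh) * huE
  have keyC : l1 * (xi q p ab * up q p ch - xi q p ch * up q p ab)
      + (l2*s1) * (xi q p bh * up q p ch - xi q p ch * up q p bh) = 0 := by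
    linear_combination (up q p ch) * hxE - (xi q p ch) * huE
  -- MAIN PACKAGE
  obtain ⟨zp, hzpBC, hzp0, hzpu, hrest⟩ :
      ∃ z : E2, z ∈ convexHull ℝ (B ∪ C) ∧ xi q p z = 0 ∧ 0 < up q p z ∧
        ((∃ zm : E2, zm ∈ convexHull ℝ (B ∪ C) ∧ xi q p zm = 0 ∧ up q p zm < 0) ∨
         ((∃ w' : E2, (w' ∈ convexHull ℝ B ∨ w' ∈ convexHull ℝ C) ∧ xi q p w' < 0) ∧
          (∃ w' : E2, (w' ∈ convexHull ℝ B ∨ w' ∈ convexHull ℝ C) ∧ 0 < xi q p w'))) := by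
    rcases lt_trichotomy (xi q p ab) 0 with hxa | hxa | hxa
    · -- xa < 0
      rcases lt_trichotomy (xi q p bh) 0 with hxb | hxb | hxb
      · -- xb < 0 ⇒ xc > 0
        have t1 : l1 * xi q p ab < 0 := mul_neg_of_pos_of_neg hl1pos hxa
        have t2 : (l2*s1) * xi q p bh < 0 := mul_neg_of_pos_of_neg hβpos hxb
        have hxc : 0 < xi q p ch := posfac _ _ hγpos (by linarith)
        have P2 : xi q p ch * up q p ab - xi q p ab * up q p ch < 0 :=
          crossNeg (A ∪ C) exAC ab ch habAC hchAC hxa hxc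
        have t3 : (l2*s2) * (xi q p ch * up q p ab - xi q p ab * up q p ch) < 0 :=
          mul_neg_of_pos_of_neg hγpos P2
        have Q1 : 0 < xi q p bh * up q p ab - xi q p ab * up q p bh :=
          posfac _ _ hβpos (by linarith)
        have t4 : l1 * (xi q p ab * up q p bh - xi q p bh * up q p ab) < 0 :=
          mul_neg_of_pos_of_neg hl1pos (by linarith)
        have R : 0 < xi q p ch * up q p bh - xi q p bh * up q p ch :=
          posfac _ _ hγpos (by linarith)
        obtain ⟨z, h1, h2, h3⟩ := mkzp bh ch hbhBC hchBC hxb hxc R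
        exact ⟨z, h1, h2, h3, Or.inr ⟨⟨bh, Or.inl hbh, hxb⟩, ⟨ch, Or.inr hch, hxc⟩⟩⟩
      · -- xb = 0
        have hub : up q p bh < 0 := exAB bh hxb hbhAB
        have t1 : l1 * xi q p ab < 0 := mul_neg_of_pos_of_neg hl1pos hxa
        have tz : (l2*s1) * xi q p bh = 0 := by rw [hxb, mul_zero]
        rcases lt_trichotomy (xi q p ch) 0 with hxc | hxc | hxc
        · exfalso
          have t2 : (l2*s2) * xi q p ch < 0 := mul_neg_of_pos_of_neg hγpos hxc
          linarith
        · exfalso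
          have t2 : (l2*s2) * xi q p ch = 0 := by rw [hxc, mul_zero]
          linarith
        · -- xc > 0 : contradiction with keyA
          exfalso
          have P2 : xi q p ch * up q p ab - xi q p ab * up q p ch < 0 :=
            crossNeg (A ∪ C) exAC ab ch habAC hchAC hxa hxc
          have t3 : (l2*s2) * (xi q p ch * up q p ab - xi q p ab * up q p ch) < 0 :=
            mul_neg_of_pos_of_neg hγpos P2
          have tpos : 0 < xi q p ab * up q p bh := mul_pos_of_neg_of_neg hxa hub
          have P1 : xi q p bh * up q p ab - xi q p ab * up q p bh < 0 := by
            rw [hxb]; linarith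
          have t4 : (l2*s1) * (xi q p bh * up q p ab - xi q p ab * up q p bh) < 0 :=
            mul_neg_of_pos_of_neg hβpos P1
          linarith
      · -- xb > 0
        rcases lt_trichotomy (xi q p ch) 0 with hxc | hxc | hxc
        · -- xc < 0
          have P1 : xi q p bh * up q p ab - xi q p ab * up q p bh < 0 :=
            crossNeg (A ∪ B) exAB ab bh habAB hbhAB hxa hxb
          have t3 : (l2*s1) * (xi q p bh * up q p ab - xi q p ab * up q p bh) < 0 :=
            mul_neg_of_pos_of_neg hβpos P1
          have Q2 : 0 < xi q p ch * up q p ab - xi q p ab * up q p ch :=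
            posfac _ _ hγpos (by linarith)
          have t4 : l1 * (xi q p ab * up q p ch - xi q p ch * up q p ab) < 0 :=
            mul_neg_of_pos_of_neg hl1pos (by linarith)
          have R : 0 < xi q p bh * up q p ch - xi q p ch * up q p bh :=
            posfac _ _ hβpos (by linarith)
          obtain ⟨z, h1, h2, h3⟩ := mkzp ch bh hchBC hbhBC hxc hxb R
          exact ⟨z, h1, h2, h3, Or.inr ⟨⟨ch, Or.inr hch, hxc⟩, ⟨bh, Or.inl hbh, hxb⟩⟩⟩
        · -- xc = 0 : contradiction
          exfalso
          have huc : up q p ch < 0 := exAC ch hxc hchAC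
          have P1 : xi q p bh * up q p ab - xi q p ab * up q p bh < 0 :=
            crossNeg (A ∪ B) exAB ab bh habAB hbhAB hxa hxb
          have t3 : (l2*s1) * (xi q p bh * up q p ab - xi q p ab * up q p bh) < 0 :=
            mul_neg_of_pos_of_neg hβpos P1
          have tpos : 0 < xi q p ab * up q p ch := mul_pos_of_neg_of_neg hxa huc
          have P2 : xi q p ch * up q p ab - xi q p ab * up q p ch < 0 := by
            rw [hxc]; linarith
          have t4 : (l2*s2) * (xi q p ch * up q p ab - xi q p ab * up q p ch) < 0 :=
            mul_neg_of_pos_of_neg hγpos P2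
          linarith
        · -- xc > 0 : contradiction
          exfalso
          have P1 : xi q p bh * up q p ab - xi q p ab * up q p bh < 0 :=
            crossNeg (A ∪ B) exAB ab bh habAB hbhAB hxa hxb
          have P2 : xi q p ch * up q p ab - xi q p ab * up q p ch < 0 :=
            crossNeg (A ∪ C) exAC ab ch habAC hchAC hxa hxc
          have t3 : (l2*s1) * (xi q p bh * up q p ab - xi q p ab * up q p bh) < 0 :=
            mul_neg_of_pos_of_neg hβpos P1
          have t4 : (l2*s2) * (xi q p ch * up q p ab - xi q p ab * up q p ch) < 0 :=
            mul_neg_of_pos_of_neg hγpos P2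
          linarith
    · -- xa = 0
      have hua : up q p ab < 0 := exAB ab hxa habAB
      have tz : l1 * xi q p ab = 0 := by rw [hxa, mul_zero]
      have hxiw : xi q p w = 0 := by
        have t : l2 * (s1 * xi q p bh + s2 * xi q p ch) = 0 := by linear_combination hxE - tz
        have t2 := (mul_eq_zero.mp t).resolve_left (ne_of_gt hl2pos)
        rw [hxw, t2]
      have hupw : 0 < up q p w := by
        have t1 : l1 * up q p ab < 0 := mul_neg_of_pos_of_neg hl1pos hua
        have t2 : l2 * up q p w = (l2*s1) * up q p bh + (l2*s2) * up q p ch := by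
          rw [huw]; ring
        refine posfac _ _ hl2pos ?_
        rw [t2]; linarith
      refine ⟨w, hw, hxiw, hupw, ?_⟩
      rcases lt_trichotomy (xi q p bh) 0 with hxb | hxb | hxb
      · have t2 : (l2*s1) * xi q p bh < 0 := mul_neg_of_pos_of_neg hβpos hxb
        have hxc : 0 < xi q p ch := posfac _ _ hγpos (by linarith)
        exact Or.inr ⟨⟨bh, Or.inl hbh, hxb⟩, ⟨ch, Or.inr hch, hxc⟩⟩
      · have hub : up q p bh < 0 := exAB bh hxb hbhAB
        exact Or.inl ⟨bh, hbhBC, hxb, hub⟩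
      · have t2 : 0 < (l2*s1) * xi q p bh := mul_pos hβpos hxb
        have hxc : xi q p ch < 0 := negfac _ _ hγpos (by linarith)
        exact Or.inr ⟨⟨ch, Or.inr hch, hxc⟩, ⟨bh, Or.inl hbh, hxb⟩⟩
    · -- xa > 0
      have t1 : 0 < l1 * xi q p ab := mul_pos hl1pos hxa
      rcases lt_trichotomy (xi q p bh) 0 with hxb | hxb | hxb
      · rcases lt_trichotomy (xi q p ch) 0 with hxc | hxc | hxc
        · -- both negative: False
          exfalso
          have P1 : xi q p ab * up q p bh - xi q p bh * up q p ab < 0 :=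
            crossNeg (A ∪ B) exAB bh ab hbhAB habAB hxb hxa
          have P2 : xi q p ab * up q p ch - xi q p ch * up q p ab < 0 :=
            crossNeg (A ∪ C) exAC ch ab hchAC habAC hxc hxa
          have t3 : 0 < (l2*s1) * (xi q p bh * up q p ab - xi q p ab * up q p bh) :=
            mul_pos hβpos (by linarith)
          have t4 : 0 < (l2*s2) * (xi q p ch * up q p ab - xi q p ab * up q p ch) :=
            mul_pos hγpos (by linarith)
          linarith
        · -- xc = 0: False
          exfalso
          have huc : up q p ch < 0 := exAC ch hxc hchAC
          have P1 : xi q p ab * up q p bh - xi q p bh * up q p ab < 0 :=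
            crossNeg (A ∪ B) exAB bh ab hbhAB habAB hxb hxa
          have t3 : 0 < (l2*s1) * (xi q p bh * up q p ab - xi q p ab * up q p bh) :=
            mul_pos hβpos (by linarith)
          have tneg : xi q p ab * up q p ch < 0 := mul_neg_of_pos_of_neg hxa huc
          have t4 : 0 < (l2*s2) * (xi q p ch * up q p ab - xi q p ab * up q p ch) := by
            refine mul_pos hγpos ?_
            rw [hxc]; linarith
          linarith
        · -- xb < 0 < xc
          have P1 : xi q p ab * up q p bh - xi q p bh * up q p ab < 0 :=
            crossNeg (A ∪ B) exAB bh ab hbhAB habAB hxb hxa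
          have t3 : 0 < (l2*s1) * (xi q p bh * up q p ab - xi q p ab * up q p bh) :=
            mul_pos hβpos (by linarith)
          have Q2 : xi q p ch * up q p ab - xi q p ab * up q p ch < 0 :=
            negfac _ _ hγpos (by linarith)
          have t4 : 0 < l1 * (xi q p ab * up q p ch - xi q p ch * up q p ab) :=
            mul_pos hl1pos (by linarith)
          have R : 0 < xi q p ch * up q p bh - xi q p bh * up q p ch := by
            have t5 : (l2*s1) * (xi q p bh * up q p ch - xi q p ch * up q p bh) < 0 := by
              linarith [keyC]
            have := negfac _ _ hβpos t5
            linarith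
          obtain ⟨z, h1, h2, h3⟩ := mkzp bh ch hbhBC hchBC hxb hxc R
          exact ⟨z, h1, h2, h3, Or.inr ⟨⟨bh, Or.inl hbh, hxb⟩, ⟨ch, Or.inr hch, hxc⟩⟩⟩
      · -- xb = 0 ⇒ xc < 0 : False
        exfalso
        have hub : up q p bh < 0 := exAB bh hxb hbhAB
        have tz : (l2*s1) * xi q p bh = 0 := by rw [hxb, mul_zero]
        have hxc : xi q p ch < 0 := negfac _ _ hγpos (by linarith)
        have P2 : xi q p ab * up q p ch - xi q p ch * up q p ab < 0 :=
          crossNeg (A ∪ C) exAC ch ab hchAC habAC hxc hxa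
        have t4 : 0 < (l2*s2) * (xi q p ch * up q p ab - xi q p ab * up q p ch) :=
          mul_pos hγpos (by linarith)
        have tneg : xi q p ab * up q p bh < 0 := mul_neg_of_pos_of_neg hxa hub
        have t3 : 0 < (l2*s1) * (xi q p bh * up q p ab - xi q p ab * up q p bh) := by
          refine mul_pos hβpos ?_
          rw [hxb]; linarith
        linarith
      · -- xb > 0 ⇒ xc < 0
        have t2 : 0 < (l2*s1) * xi q p bh := mul_pos hβpos hxb
        have hxc : xi q p ch < 0 := negfac _ _ hγpos (by linarith)
        have P2 : xi q p ab * up q p ch - xi q p ch * up q p ab < 0 :=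
          crossNeg (A ∪ C) exAC ch ab hchAC habAC hxc hxa
        have t4 : 0 < (l2*s2) * (xi q p ch * up q p ab - xi q p ab * up q p ch) :=
          mul_pos hγpos (by linarith)
        have Q1 : xi q p bh * up q p ab - xi q p ab * up q p bh < 0 :=
          negfac _ _ hβpos (by linarith)
        have t5 : 0 < l1 * (xi q p ab * up q p bh - xi q p bh * up q p ab) :=
          mul_pos hl1pos (by linarith)
        have R : 0 < xi q p bh * up q p ch - xi q p ch * up q p bh := by
          have t6 : (l2*s2) * (xi q p ch * up q p bh - xi q p bh * up q p ch) < 0 := by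
            linarith [keyB]
          have := negfac _ _ hγpos t6
          linarith
        obtain ⟨z, h1, h2, h3⟩ := mkzp ch bh hchBC hbhBC hxc hxb R
        exact ⟨z, h1, h2, h3, Or.inr ⟨⟨ch, Or.inr hch, hxc⟩, ⟨bh, Or.inl hbh, hxb⟩⟩⟩
  -- final contradiction machinery
  have final : ∀ zm : E2, zm ∈ convexHull ℝ (B ∪ C) → xi q p zm = 0 → up q p zm < 0 → False := by
    intro zm h1 h2 h3
    have hseg := mem_segment_sandwich q p hqp h2 hzp0 h3 hzpu
    exact hq2 ((convex_convexHull ℝ _).segment_subset h1 hzpBC hseg)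
  rcases hrest with ⟨zm, h1, h2, h3⟩ | ⟨⟨wm, hwmmem, hwmxi⟩, ⟨wpp, hwpmem, hwpxi⟩⟩
  · exact final zm h1 h2 h3
  rcases lt_trichotomy (xi q p bt) 0 with hb | hb | hb
  · rcases lt_trichotomy (xi q p ct) 0 with hc | hc | hc
    · rcases hwpmem with hwB | hwC
      · obtain ⟨z, hseg, h0, _⟩ := cross_lemma q p hb hwpxi
        have hmem : z ∈ convexHull ℝ B := (convex_convexHull ℝ _).segment_subset hbt hwB hseg
        exact final z (hB_BC hmem) h0 (exAB z h0 (hB_AB hmem))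
      · obtain ⟨z, hseg, h0, _⟩ := cross_lemma q p hc hwpxi
        have hmem : z ∈ convexHull ℝ C := (convex_convexHull ℝ _).segment_subset hct hwC hseg
        exact final z (hC_BC hmem) h0 (exAC z h0 (hC_AC hmem))
    · have huct : up q p ct < 0 := by
        by_contra hge
        push_neg at hge
        exact absurd (hfray ct hc hge) (not_lt.2 hfct)
      exact final ct hctBC hc huct
    · -- bt < 0 < ct
      obtain ⟨z, hseg, h0, hrel⟩ := cross_lemma q p hb hc
      have hmem : z ∈ convexHull ℝ (B ∪ C) := (convex_convexHull ℝ _).segment_subset hbtBC hctBC hseg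
      have hd : 0 < xi q p ct - xi q p bt := by linarith
      have hfz : f p ≤ f z := by
        have hr := hrel f haff_f
        have t1 : xi q p ct * f p ≤ xi q p ct * f bt := mul_le_mul_of_nonneg_left hfbt hc.le
        have t2 : (- xi q p bt) * f p ≤ (- xi q p bt) * f ct :=
          mul_le_mul_of_nonneg_left hfct (by linarith)
        have t3 : (xi q p ct - xi q p bt) * f p ≤ (xi q p ct - xi q p bt) * f z := by
          rw [hr]; nlinarith [t1, t2]
        exact le_of_mul_le_mul_left t3 hd
      have hupz : up q p z < 0 := by
        by_contra hge
        push_neg at hge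
        exact absurd (hfray z h0 hge) (not_lt.2 hfz)
      exact final z hmem h0 hupz
  · have hubt : up q p bt < 0 := by
      by_contra hge
      push_neg at hge
      exact absurd (hfray bt hb hge) (not_lt.2 hfbt)
    exact final bt hbtBC hb hubt
  · rcases lt_trichotomy (xi q p ct) 0 with hc | hc | hc
    · -- ct < 0 < bt
      obtain ⟨z, hseg, h0, hrel⟩ := cross_lemma q p hc hb
      have hmem : z ∈ convexHull ℝ (B ∪ C) := (convex_convexHull ℝ _).segment_subset hctBC hbtBC hseg
      have hd : 0 < xi q p bt - xi q p ct := by linarith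
      have hfz : f p ≤ f z := by
        have hr := hrel f haff_f
        have t1 : xi q p bt * f p ≤ xi q p bt * f ct := mul_le_mul_of_nonneg_left hfct hb.le
        have t2 : (- xi q p ct) * f p ≤ (- xi q p ct) * f bt :=
          mul_le_mul_of_nonneg_left hfbt (by linarith)
        have t3 : (xi q p bt - xi q p ct) * f p ≤ (xi q p bt - xi q p ct) * f z := by
          rw [hr]; nlinarith [t1, t2]
        exact le_of_mul_le_mul_left t3 hd
      have hupz : up q p z < 0 := by
        by_contra hge
        push_neg at hge
        exact absurd (hfray z h0 hge) (not_lt.2 hfz)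
      exact final z hmem h0 hupz
    · have huct : up q p ct < 0 := by
        by_contra hge
        push_neg at hge
        exact absurd (hfray ct hc hge) (not_lt.2 hfct)
      exact final ct hctBC hc huct
    · rcases hwmmem with hwB | hwC
      · obtain ⟨z, hseg, h0, _⟩ := cross_lemma q p hwmxi hb
        have hmem : z ∈ convexHull ℝ B := (convex_convexHull ℝ _).segment_subset hwB hbt hseg
        exact final z (hB_BC hmem) h0 (exAB z h0 (hB_AB hmem))
      · obtain ⟨z, hseg, h0, _⟩ := cross_lemma q p hwmxi hc
        have hmem : z ∈ convexHull ℝ C := (convex_convexHull ℝ _).segment_subset hwC hct hseg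
        exact final z (hC_BC hmem) h0 (exAC z h0 (hC_AC hmem))


lemma collapse (G₀ S T : Set E2) (hS : S ⊆ G₀) :
    convexHull ℝ ((convexHull ℝ S ∩ G₀) ∪ T) ∩ G₀ = convexHull ℝ (S ∪ T) ∩ G₀ := by
  have h : convexHull ℝ ((convexHull ℝ S ∩ G₀) ∪ T) = convexHull ℝ (S ∪ T) := by
    apply Subset.antisymm
    · apply convexHull_min
      · apply union_subset
        · exact inter_subset_left.trans (convexHull_mono subset_union_left)
        · exact Subset.trans subset_union_right (subset_convexHull ℝ _)
      · exact convex_convexHull ℝ _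
    · exact convexHull_mono (union_subset_union_left T (subset_inter (subset_convexHull ℝ S) hS))
  rw [h]

end Stmt9Geo


namespace Stmt9Abs

variable {α : Type*} {G : Set α} {cl : Set α → Set α}

/-- In a finite convex geometry, if `W ⊆ cl {y}` and `y ∉ W` then `y ∉ cl W`. -/
lemma not_mem_cl_of_subset (hG : IsConvexGeometry G cl) (hGfin : G.Finite)
    {y : α} (hy : y ∈ G) :
    ∀ W : Set α, W ⊆ cl {y} → y ∉ W → y ∉ cl W := by
  obtain ⟨hext, hsubG, hmono, hidem, hzero, hAE⟩ := hG
  have hyG : ({y} : Set α) ⊆ G := singleton_subset_iff.2 hy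
  have hclyG : cl {y} ⊆ G := hsubG _ hyG
  suffices H : ∀ n : ℕ, ∀ W : Set α, W ⊆ cl {y} → y ∉ W → W.ncard ≤ n → y ∉ cl W by
    intro W hW hyW
    exact H W.ncard W hW hyW le_rfl
  intro n
  induction n with
  | zero =>
    intro W hW hyW hcard
    have hWfin : W.Finite := hGfin.subset (hW.trans hclyG)
    have : W = ∅ := by
      rw [← Set.ncard_eq_zero hWfin]
      omega
    rw [this, hzero]
    exact notMem_empty y
  | succ n ih =>
    intro W hW hyW hcard
    by_contra hmem
    have hWG : W ⊆ G := hW.trans hclyG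
    have hWfin : W.Finite := hGfin.subset hWG
    by_cases hex : ∃ w ∈ W, y ∈ cl (W \ {w})
    · obtain ⟨w, hwW, hmem'⟩ := hex
      have hlt : (W \ {w}).ncard < W.ncard := Set.ncard_diff_singleton_lt_of_mem hwW hWfin
      have hle : (W \ {w}).ncard ≤ n := by omega
      exact ih (W \ {w}) (diff_subset.trans hW) (fun h => hyW h.1) hle hmem'
    · push_neg at hex
      have hWne : W.Nonempty := by
        rcases W.eq_empty_or_nonempty with rfl | h
        · rw [hzero] at hmem; exact absurd hmem (notMem_empty y)
        · exact h
      obtain ⟨w, hwW⟩ := hWne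
      have hdG : W \ {w} ⊆ G := diff_subset.trans hWG
      have hTG : cl (W \ {w}) ⊆ G := hsubG _ hdG
      have hTcl : cl (cl (W \ {w})) = cl (W \ {w}) := hidem _ hdG
      have hyT : y ∉ cl (W \ {w}) := hex w hwW
      have hwy : y ≠ w := fun h => hyW (h ▸ hwW)
      have hsub : W ⊆ cl (W \ {w}) ∪ {w} := by
        intro z hz
        by_cases hzw : z = w
        · exact Or.inr (by simp [hzw])
        · exact Or.inl (hext _ hdG ⟨hz, hzw⟩)
      have hUG : cl (W \ {w}) ∪ {w} ⊆ G :=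
        union_subset hTG (singleton_subset_iff.2 (hWG hwW))
      have hmem2 : y ∈ cl (cl (W \ {w}) ∪ {w}) := hmono W _ hsub hUG hmem
      have hAEres := hAE y hy w (hWG hwW) hwy (cl (W \ {w})) hTG hTcl hmem2 hyT
      apply hAEres
      have hsub2 : cl {y} ⊆ cl (cl (W \ {w}) ∪ {y}) := by
        refine hmono {y} _ ?_ ?_
        · exact subset_union_right
        · exact union_subset hTG hyG
      exact hsub2 (hW hwW)

/-- `cl {y} \ {y}` is closed. -/
lemma diff_closed (hG : IsConvexGeometry G cl) (hGfin : G.Finite) {y : α} (hy : y ∈ G) :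
    cl (cl {y} \ {y}) = cl {y} \ {y} := by
  have hyG : ({y} : Set α) ⊆ G := singleton_subset_iff.2 hy
  have hclyG : cl {y} ⊆ G := hG.2.1 _ hyG
  have hnm : y ∉ cl (cl {y} \ {y}) :=
    not_mem_cl_of_subset hG hGfin hy _ diff_subset (fun h => h.2 rfl)
  apply Subset.antisymm
  · intro z hz
    constructor
    · have h1 : cl (cl {y} \ {y}) ⊆ cl (cl {y}) :=
        hG.2.2.1 _ _ diff_subset (hG.2.1 _ hyG)
      rw [hG.2.2.2.1 _ hyG] at h1
      exact h1 hz
    · intro hzy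
      rw [mem_singleton_iff] at hzy
      exact hnm (hzy ▸ hz)
  · exact hG.1 _ (diff_subset.trans hclyG)

end Stmt9Abs


set_option maxHeartbeats 1000000

/-- Theorem `sharp` of the paper: in any finite sub-geometry `(G, cl)`
of a finite two-dimensional geometry `Co(ℝ², G₀)`: if `y ∈ cl {a,b,c}`, the closure
of `y` meets neither `cl {a,b}`, `cl {b,c}`, `cl {a,c}` nor `cl {x}`, and
`x ∈ cl {y,a,b}` and `x ∈ cl {y,a,c}`, then `cl {x} ∩ cl {y,a} ≠ ∅`. -/
theorem stmt_9 {α : Type*} (G₀ : Set (Fin 2 → ℝ)) (hG₀ : G₀.Finite)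
    (G : Set α) (cl : Set α → Set α) (hG : IsConvexGeometry G cl) (hGfin : G.Finite)
    (hsub : IsSubGeometry G cl G₀ (fun Z => convexHull ℝ Z ∩ G₀))
    (x y a b c : α)
    (hx : x ∈ G) (hy : y ∈ G) (ha : a ∈ G) (hb : b ∈ G) (hc : c ∈ G)
    (h1 : y ∈ cl {a, b, c})
    (h2 : cl {y} ∩ cl {a, b} = ∅)
    (h3 : cl {y} ∩ cl {b, c} = ∅)
    (h4 : cl {y} ∩ cl {a, c} = ∅)
    (h5 : cl {y} ∩ cl {x} = ∅)
    (h6 : x ∈ cl {y, a, b})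
    (h7 : x ∈ cl {y, a, c}) :
    cl {x} ∩ cl {y, a} ≠ ∅ := by
  obtain ⟨hext, hsubG, hmono, hidem, hzero, hAE⟩ := id hG
  obtain ⟨φ, hφcl0, hφinj0, hφmeet0, hφjoin0⟩ := hsub
  have hφcl : ∀ X : Set α, X ⊆ G → cl X = X → φ X ⊆ G₀ ∧ convexHull ℝ (φ X) ∩ G₀ = φ X := hφcl0
  have hφinj : ∀ X Y : Set α, X ⊆ G → cl X = X → Y ⊆ G → cl Y = Y → φ X = φ Y → X = Y := hφinj0
  have hφmeet : ∀ X Y : Set α, X ⊆ G → cl X = X → Y ⊆ G → cl Y = Y →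
      φ (X ∩ Y) = φ X ∩ φ Y := hφmeet0
  have hφjoin : ∀ X Y : Set α, X ⊆ G → cl X = X → Y ⊆ G → cl Y = Y →
      φ (cl (X ∪ Y)) = convexHull ℝ (φ X ∪ φ Y) ∩ G₀ := hφjoin0
  intro hcon
  -- subset facts
  have hxg : ({x} : Set α) ⊆ G := singleton_subset_iff.2 hx
  have hyg : ({y} : Set α) ⊆ G := singleton_subset_iff.2 hy
  have hag : ({a} : Set α) ⊆ G := singleton_subset_iff.2 ha
  have hbg : ({b} : Set α) ⊆ G := singleton_subset_iff.2 hb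
  have hcg : ({c} : Set α) ⊆ G := singleton_subset_iff.2 hc
  have hyag : ({y, a} : Set α) ⊆ G := by
    intro z hz; simp only [mem_insert_iff, mem_singleton_iff] at hz
    rcases hz with rfl | rfl <;> assumption
  have habg : ({a, b} : Set α) ⊆ G := by
    intro z hz; simp only [mem_insert_iff, mem_singleton_iff] at hz
    rcases hz with rfl | rfl <;> assumption
  have hacg : ({a, c} : Set α) ⊆ G := by
    intro z hz; simp only [mem_insert_iff, mem_singleton_iff] at hz
    rcases hz with rfl | rfl <;> assumption
  have hbcg : ({b, c} : Set α) ⊆ G := by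
    intro z hz; simp only [mem_insert_iff, mem_singleton_iff] at hz
    rcases hz with rfl | rfl <;> assumption
  have habcg : ({a, b, c} : Set α) ⊆ G := by
    intro z hz; simp only [mem_insert_iff, mem_singleton_iff] at hz
    rcases hz with rfl | rfl | rfl <;> assumption
  have hyabg : ({y, a, b} : Set α) ⊆ G := by
    intro z hz; simp only [mem_insert_iff, mem_singleton_iff] at hz
    rcases hz with rfl | rfl | rfl <;> assumption
  have hyacg : ({y, a, c} : Set α) ⊆ G := by
    intro z hz; simp only [mem_insert_iff, mem_singleton_iff] at hz
    rcases hz with rfl | rfl | rfl <;> assumption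
  have habxg : ({a, b} ∪ {x} : Set α) ⊆ G := union_subset habg hxg
  have hacxg : ({a, c} ∪ {x} : Set α) ⊆ G := union_subset hacg hxg
  -- closure algebra
  have clunion' : ∀ S T : Set α, S ⊆ G → T ⊆ G → cl (cl S ∪ T) = cl (S ∪ T) := by
    intro S T hS hT
    apply Subset.antisymm
    · have h1' : cl S ∪ T ⊆ cl (S ∪ T) := by
        apply union_subset
        · exact hmono S (S ∪ T) subset_union_left (union_subset hS hT)
        · exact Subset.trans subset_union_right (hext _ (union_subset hS hT))
      have h2' := hmono (cl S ∪ T) (cl (S ∪ T)) h1' (hsubG _ (union_subset hS hT))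
      rw [hidem _ (union_subset hS hT)] at h2'
      exact h2'
    · apply hmono
      · exact union_subset_union_left T (hext S hS)
      · exact union_subset (hsubG _ hS) hT
  have clunion2 : ∀ S T : Set α, S ⊆ G → T ⊆ G → cl (cl S ∪ cl T) = cl (S ∪ T) := by
    intro S T hS hT
    rw [clunion' S (cl T) hS (hsubG _ hT), union_comm S (cl T),
      clunion' T S hT hS, union_comm]
  have memcl : ∀ (z : α) (S : Set α), S ⊆ G → z ∈ cl S → cl {z} ⊆ cl S := by
    intro z S hS hzS
    have h2' := hmono {z} (cl S) (singleton_subset_iff.2 hzS) (hsubG _ hS)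
    rw [hidem _ hS] at h2'
    exact h2'
  have φmono : ∀ U V : Set α, U ⊆ G → cl U = U → V ⊆ G → cl V = V → U ⊆ V → φ U ⊆ φ V := by
    intro U V hU hUc hV hVc hUV
    have h1' := hφmeet U V hU hUc hV hVc
    rw [inter_eq_left.2 hUV] at h1'
    rw [h1']
    exact inter_subset_right
  have joinφ : ∀ (S T : Set α), S ⊆ G → T ⊆ G →
      φ (cl (S ∪ T)) = convexHull ℝ (φ (cl S) ∪ φ (cl T)) ∩ G₀ := by
    intro S T hS hT
    have h1' := hφjoin (cl S) (cl T) (hsubG _ hS) (hidem _ hS) (hsubG _ hT) (hidem _ hT)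
    rw [clunion2 S T hS hT] at h1'
    exact h1'
  -- set names
  have hXsG : φ (cl {x}) ⊆ G₀ := (hφcl _ (hsubG _ hxg) (hidem _ hxg)).1
  have hYsG : φ (cl {y}) ⊆ G₀ := (hφcl _ (hsubG _ hyg) (hidem _ hyg)).1
  have hAsG : φ (cl {a}) ⊆ G₀ := (hφcl _ (hsubG _ hag) (hidem _ hag)).1
  have hBsG : φ (cl {b}) ⊆ G₀ := (hφcl _ (hsubG _ hbg) (hidem _ hbg)).1
  have hCsG : φ (cl {c}) ⊆ G₀ := (hφcl _ (hsubG _ hcg) (hidem _ hcg)).1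
  -- pair and triple join formulas
  have hYAp : φ (cl {y, a}) = convexHull ℝ (φ (cl {y}) ∪ φ (cl {a})) ∩ G₀ := by
    have h' := joinφ {y} {a} hyg hag
    rwa [singleton_union] at h'
  have hABp : φ (cl {a, b}) = convexHull ℝ (φ (cl {a}) ∪ φ (cl {b})) ∩ G₀ := by
    have h' := joinφ {a} {b} hag hbg
    rwa [singleton_union] at h'
  have hACp : φ (cl {a, c}) = convexHull ℝ (φ (cl {a}) ∪ φ (cl {c})) ∩ G₀ := by
    have h' := joinφ {a} {c} hag hcg
    rwa [singleton_union] at h'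
  have hBCp : φ (cl {b, c}) = convexHull ℝ (φ (cl {b}) ∪ φ (cl {c})) ∩ G₀ := by
    have h' := joinφ {b} {c} hbg hcg
    rwa [singleton_union] at h'
  have hYAB : φ (cl {y, a, b}) = convexHull ℝ (φ (cl {y}) ∪ φ (cl {a}) ∪ φ (cl {b})) ∩ G₀ := by
    have e2 : ({y, a} ∪ {b} : Set α) = {y, a, b} := by ext z; simp; tauto
    have h' := joinφ {y, a} {b} hyag hbg
    rw [e2, hYAp] at h'
    rw [h']
    exact Stmt9Geo.collapse G₀ _ _ (union_subset hYsG hAsG)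
  have hYAC : φ (cl {y, a, c}) = convexHull ℝ (φ (cl {y}) ∪ φ (cl {a}) ∪ φ (cl {c})) ∩ G₀ := by
    have e2 : ({y, a} ∪ {c} : Set α) = {y, a, c} := by ext z; simp; tauto
    have h' := joinφ {y, a} {c} hyag hcg
    rw [e2, hYAp] at h'
    rw [h']
    exact Stmt9Geo.collapse G₀ _ _ (union_subset hYsG hAsG)
  have hABC : φ (cl {a, b, c}) = convexHull ℝ (φ (cl {a}) ∪ φ (cl {b}) ∪ φ (cl {c})) ∩ G₀ := by
    have e2 : ({a, b} ∪ {c} : Set α) = {a, b, c} := by ext z; simp; tauto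
    have h' := joinφ {a, b} {c} habg hcg
    rw [e2, hABp] at h'
    rw [h']
    exact Stmt9Geo.collapse G₀ _ _ (union_subset hAsG hBsG)
  have hABX : φ (cl ({a, b} ∪ {x})) = convexHull ℝ (φ (cl {a}) ∪ φ (cl {b}) ∪ φ (cl {x})) ∩ G₀ := by
    have h' := joinφ {a, b} {x} habg hxg
    rw [hABp] at h'
    rw [h']
    exact Stmt9Geo.collapse G₀ _ _ (union_subset hAsG hBsG)
  have hACX : φ (cl ({a, c} ∪ {x})) = convexHull ℝ (φ (cl {a}) ∪ φ (cl {c}) ∪ φ (cl {x})) ∩ G₀ := by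
    have h' := joinφ {a, c} {x} hacg hxg
    rw [hACp] at h'
    rw [h']
    exact Stmt9Geo.collapse G₀ _ _ (union_subset hAsG hCsG)
  -- the point p
  have hXEne : φ (cl {x}) ≠ φ ∅ := by
    intro h
    have heq := hφinj _ ∅ (hsubG _ hxg) (hidem _ hxg) (empty_subset G) hzero h
    have : x ∈ cl {x} := hext _ hxg rfl
    rw [heq] at this
    exact absurd this (notMem_empty x)
  have hEX : φ ∅ ⊆ φ (cl {x}) :=
    φmono ∅ _ (empty_subset G) hzero (hsubG _ hxg) (hidem _ hxg) (empty_subset _)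
  obtain ⟨p, hpX, hpE⟩ := not_subset.mp (fun h => hXEne (Subset.antisymm h hEX))
  -- the point q
  have hWG : cl {y} \ {y} ⊆ G := diff_subset.trans (hsubG _ hyg)
  have hWc : cl (cl {y} \ {y}) = cl {y} \ {y} := Stmt9Abs.diff_closed hG hGfin hy
  have hYWne : φ (cl {y}) ≠ φ (cl {y} \ {y}) := by
    intro h
    have heq := hφinj _ _ (hsubG _ hyg) (hidem _ hyg) hWG hWc h
    have hymem : y ∈ cl {y} := hext _ hyg rfl
    rw [heq] at hymem
    exact hymem.2 rfl
  have hWY : φ (cl {y} \ {y}) ⊆ φ (cl {y}) :=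
    φmono _ _ hWG hWc (hsubG _ hyg) (hidem _ hyg) diff_subset
  obtain ⟨q, hqY, hqW⟩ := not_subset.mp (fun h => hYWne (Subset.antisymm h hWY))
  have hEW : φ ∅ ⊆ φ (cl {y} \ {y}) :=
    φmono ∅ _ (empty_subset G) hzero hWG hWc (empty_subset _)
  -- hypotheses for geom_main
  have hq1' : q ∈ convexHull ℝ (φ (cl {a}) ∪ φ (cl {b}) ∪ φ (cl {c})) := by
    have hsub1 : cl {y} ⊆ cl {a, b, c} := memcl y {a, b, c} habcg h1
    have hsub2 : φ (cl {y}) ⊆ φ (cl {a, b, c}) :=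
      φmono _ _ (hsubG _ hyg) (hidem _ hyg) (hsubG _ habcg) (hidem _ habcg) hsub1
    have := hsub2 hqY
    rw [hABC] at this
    exact this.1
  have hq2' : q ∉ convexHull ℝ (φ (cl {b}) ∪ φ (cl {c})) := by
    intro hmem
    have hq3 : q ∈ φ (cl {b, c}) := by rw [hBCp]; exact ⟨hmem, hYsG hqY⟩
    have hq4 : q ∈ φ (cl {y} ∩ cl {b, c}) := by
      rw [hφmeet (cl {y}) (cl {b, c}) (hsubG _ hyg) (hidem _ hyg) (hsubG _ hbcg) (hidem _ hbcg)]
      exact ⟨hqY, hq3⟩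
    rw [h3] at hq4
    exact hqW (hEW hq4)
  have hqK' : q ∈ convexHull ℝ (φ (cl {y}) ∪ φ (cl {a})) :=
    subset_convexHull ℝ _ (Or.inl hqY)
  have hp1' : p ∈ convexHull ℝ (φ (cl {y}) ∪ φ (cl {a}) ∪ φ (cl {b})) := by
    have hsub1 : cl {x} ⊆ cl {y, a, b} := memcl x {y, a, b} hyabg h6
    have hsub2 : φ (cl {x}) ⊆ φ (cl {y, a, b}) :=
      φmono _ _ (hsubG _ hxg) (hidem _ hxg) (hsubG _ hyabg) (hidem _ hyabg) hsub1
    have := hsub2 hpX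
    rw [hYAB] at this
    exact this.1
  have hp2' : p ∈ convexHull ℝ (φ (cl {y}) ∪ φ (cl {a}) ∪ φ (cl {c})) := by
    have hsub1 : cl {x} ⊆ cl {y, a, c} := memcl x {y, a, c} hyacg h7
    have hsub2 : φ (cl {x}) ⊆ φ (cl {y, a, c}) :=
      φmono _ _ (hsubG _ hxg) (hidem _ hxg) (hsubG _ hyacg) (hidem _ hyacg) hsub1
    have := hsub2 hpX
    rw [hYAC] at this
    exact this.1
  have hp3' : p ∉ convexHull ℝ (φ (cl {y}) ∪ φ (cl {a})) := by
    intro hmem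
    have hq3 : p ∈ φ (cl {y, a}) := by rw [hYAp]; exact ⟨hmem, hXsG hpX⟩
    have hq4 : p ∈ φ (cl {x} ∩ cl {y, a}) := by
      rw [hφmeet (cl {x}) (cl {y, a}) (hsubG _ hxg) (hidem _ hxg) (hsubG _ hyag) (hidem _ hyag)]
      exact ⟨hpX, hq3⟩
    rw [hcon] at hq4
    exact hpE hq4
  have hYf : (φ (cl {y})).Finite := hG₀.subset hYsG
  have hAf : (φ (cl {a})).Finite := hG₀.subset hAsG
  rcases Stmt9Geo.geom_main (φ (cl {y})) (φ (cl {a})) (φ (cl {b})) (φ (cl {c})) hYf hAf q p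
    hq1' hq2' hqK' hp1' hp2' hp3' with hcase | hcase
  · -- q ∈ conv(As ∪ Bs ∪ {p})
    have hqin : q ∈ convexHull ℝ (φ (cl {a}) ∪ φ (cl {b}) ∪ φ (cl {x})) :=
      convexHull_mono (union_subset_union_right _ (singleton_subset_iff.2 hpX)) hcase
    have hq3 : q ∈ φ (cl ({a, b} ∪ {x})) := by rw [hABX]; exact ⟨hqin, hYsG hqY⟩
    have hq4 : q ∈ φ (cl {y} ∩ cl ({a, b} ∪ {x})) := by
      rw [hφmeet (cl {y}) (cl ({a, b} ∪ {x})) (hsubG _ hyg) (hidem _ hyg)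
        (hsubG _ habxg) (hidem _ habxg)]
      exact ⟨hqY, hq3⟩
    have hyin : y ∈ cl ({a, b} ∪ {x}) := by
      by_contra hyni
      have hM : cl {y} ∩ cl ({a, b} ∪ {x}) ⊆ cl {y} \ {y} := by
        intro z hz
        refine ⟨hz.1, ?_⟩
        intro hzy
        rw [mem_singleton_iff] at hzy
        exact hyni (hzy ▸ hz.2)
      have hMG : cl {y} ∩ cl ({a, b} ∪ {x}) ⊆ G := inter_subset_left.trans (hsubG _ hyg)
      have hMc : cl (cl {y} ∩ cl ({a, b} ∪ {x})) = cl {y} ∩ cl ({a, b} ∪ {x}) := by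
        apply Subset.antisymm
        · apply subset_inter
          · have h' := hmono (cl {y} ∩ cl ({a, b} ∪ {x})) (cl {y}) inter_subset_left (hsubG _ hyg)
            rwa [hidem _ hyg] at h'
          · have h' := hmono (cl {y} ∩ cl ({a, b} ∪ {x})) (cl ({a, b} ∪ {x})) inter_subset_right (hsubG _ habxg)
            rwa [hidem _ habxg] at h'
        · exact hext _ hMG
      have := φmono _ _ hMG hMc hWG hWc hM
      exact hqW (this hq4)
    have hyab : y ∉ cl {a, b} := by
      intro hmem'
      have : y ∈ cl {y} ∩ cl {a, b} := ⟨hext _ hyg rfl, hmem'⟩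
      rw [h2] at this
      exact absurd this (notMem_empty y)
    have hyx : y ≠ x := by
      intro hyx
      have : y ∈ cl {y} ∩ cl {x} := ⟨hext _ hyg rfl, by rw [hyx]; exact hext _ hxg rfl⟩
      rw [h5] at this
      exact absurd this (notMem_empty y)
    have hyin2 : y ∈ cl (cl {a, b} ∪ {x}) := by
      rw [clunion' {a, b} {x} habg hxg]; exact hyin
    have hres := hAE y hy x hx hyx (cl {a, b}) (hsubG _ habg) (hidem _ habg) hyin2 hyab
    apply hres
    rw [clunion' {a, b} {y} habg hyg]
    have hseteq : ({a, b} ∪ {y} : Set α) = {y, a, b} := by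
      ext z; simp only [mem_union, mem_insert_iff, mem_singleton_iff]; tauto
    rw [hseteq]
    exact h6
  · -- q ∈ conv(As ∪ Cs ∪ {p})
    have hqin : q ∈ convexHull ℝ (φ (cl {a}) ∪ φ (cl {c}) ∪ φ (cl {x})) :=
      convexHull_mono (union_subset_union_right _ (singleton_subset_iff.2 hpX)) hcase
    have hq3 : q ∈ φ (cl ({a, c} ∪ {x})) := by rw [hACX]; exact ⟨hqin, hYsG hqY⟩
    have hq4 : q ∈ φ (cl {y} ∩ cl ({a, c} ∪ {x})) := by
      rw [hφmeet (cl {y}) (cl ({a, c} ∪ {x})) (hsubG _ hyg) (hidem _ hyg)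
        (hsubG _ hacxg) (hidem _ hacxg)]
      exact ⟨hqY, hq3⟩
    have hyin : y ∈ cl ({a, c} ∪ {x}) := by
      by_contra hyni
      have hM : cl {y} ∩ cl ({a, c} ∪ {x}) ⊆ cl {y} \ {y} := by
        intro z hz
        refine ⟨hz.1, ?_⟩
        intro hzy
        rw [mem_singleton_iff] at hzy
        exact hyni (hzy ▸ hz.2)
      have hMG : cl {y} ∩ cl ({a, c} ∪ {x}) ⊆ G := inter_subset_left.trans (hsubG _ hyg)
      have hMc : cl (cl {y} ∩ cl ({a, c} ∪ {x})) = cl {y} ∩ cl ({a, c} ∪ {x}) := by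
        apply Subset.antisymm
        · apply subset_inter
          · have h' := hmono (cl {y} ∩ cl ({a, c} ∪ {x})) (cl {y}) inter_subset_left (hsubG _ hyg)
            rwa [hidem _ hyg] at h'
          · have h' := hmono (cl {y} ∩ cl ({a, c} ∪ {x})) (cl ({a, c} ∪ {x})) inter_subset_right (hsubG _ hacxg)
            rwa [hidem _ hacxg] at h'
        · exact hext _ hMG
      have := φmono _ _ hMG hMc hWG hWc hM
      exact hqW (this hq4)
    have hyac : y ∉ cl {a, c} := by
      intro hmem'
      have : y ∈ cl {y} ∩ cl {a, c} := ⟨hext _ hyg rfl, hmem'⟩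
      rw [h4] at this
      exact absurd this (notMem_empty y)
    have hyx : y ≠ x := by
      intro hyx
      have : y ∈ cl {y} ∩ cl {x} := ⟨hext _ hyg rfl, by rw [hyx]; exact hext _ hxg rfl⟩
      rw [h5] at this
      exact absurd this (notMem_empty y)
    have hyin2 : y ∈ cl (cl {a, c} ∪ {x}) := by
      rw [clunion' {a, c} {x} hacg hxg]; exact hyin
    have hres := hAE y hy x hx hyx (cl {a, c}) (hsubG _ hacg) (hidem _ hacg) hyin2 hyac
    apply hres
    rw [clunion' {a, c} {y} hacg hyg]
    have hseteq : ({a, c} ∪ {y} : Set α) = {y, a, c} := by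
      ext z; simp only [mem_union, mem_insert_iff, mem_singleton_iff]; tauto
    rw [hseteq]
    exact h7
end

section
/- Every finite convex geometry (A, cl) has a strong atomistic extension: there exists a convex geometry (A, τ) on the same finite set A such that τ({a}) = {a} for every a ∈ A (τ is atomistic), every cl-closed set is τ-closed, and cl(X ∪ Y) = τ(X ∪ Y) for all cl-closed X, Y ⊆ A. In particular, every finite convex geometry is a sub-geometry of a finite atomistic convex geometry. -/
namespace Stmt14

variable {α : Type*}

/-- `D` is join-closed: the `cl`-join of any two `cl`-closed subsets of `D` stays in `D`. -/
def JC (A : Set α) (cl : Set α → Set α) (D : Set α) : Prop :=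
  ∀ X Y : Set α, X ⊆ A → cl X = X → X ⊆ D → Y ⊆ A → cl Y = Y → Y ⊆ D →
    cl (X ∪ Y) ⊆ D

/-- `D` is chainable: it can be grown to `A` one point at a time through join-closed sets. -/
inductive Ch (A : Set α) (cl : Set α → Set α) : Set α → Prop
  | top : Ch A cl A
  | step (S T : Set α) : Ch A cl S → T ⊆ S → JC A cl T → (S \ T).Subsingleton →
      Ch A cl T

variable {A : Set α} {cl : Set α → Set α}

lemma ch_subset {D : Set α} (h : Ch A cl D) : D ⊆ A := by
  induction h with
  | top => exact subset_rfl
  | step S T hS hTS hJC hss ih => exact hTS.trans ih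

lemma jc_top (hcl : IsConvexGeometry A cl) : JC A cl A := by
  obtain ⟨hext, hsub, hmono, hidem, hempty, hae⟩ := hcl
  intro X Y hXA hX hXD hYA hY hYD
  exact hsub _ (Set.union_subset hXA hYA)

lemma ch_jc (hcl : IsConvexGeometry A cl) {D : Set α} (h : Ch A cl D) : JC A cl D := by
  induction h with
  | top => exact jc_top hcl
  | step S T hS hTS hJC hss ih => exact hJC

lemma jc_inter {D E : Set α} (hD : JC A cl D) (hE : JC A cl E) : JC A cl (D ∩ E) := by
  intro X Y hXA hX hXD hYA hY hYD
  exact Set.subset_inter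
    (hD X Y hXA hX (hXD.trans Set.inter_subset_left) hYA hY (hYD.trans Set.inter_subset_left))
    (hE X Y hXA hX (hXD.trans Set.inter_subset_right) hYA hY (hYD.trans Set.inter_subset_right))

lemma jc_closed (hcl : IsConvexGeometry A cl) {C : Set α} (hCA : C ⊆ A) (hC : cl C = C) :
    JC A cl C := by
  obtain ⟨hext, hsub, hmono, hidem, hempty, hae⟩ := hcl
  intro X Y hXA hX hXD hYA hY hYD
  calc cl (X ∪ Y) ⊆ cl C := hmono _ _ (Set.union_subset hXD hYD) hCA
    _ = C := hC

lemma ch_inter (hcl : IsConvexGeometry A cl) {D E : Set α}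
    (hD : Ch A cl D) (hE : Ch A cl E) : Ch A cl (D ∩ E) := by
  induction hD with
  | top => rwa [Set.inter_eq_self_of_subset_right (ch_subset hE)]
  | step S T hS hTS hJC hss ih =>
      exact Ch.step (S ∩ E) (T ∩ E) ih (Set.inter_subset_inter_left E hTS)
        (jc_inter hJC (ch_jc hcl hE))
        (hss.anti (by intro z hz; exact ⟨hz.1.1, fun hzT => hz.2 ⟨hzT, hz.1.2⟩⟩))


/-- Relative upward cover: between two nested closed sets one can add a single point. -/
lemma exists_cover (hA : A.Finite) (hcl : IsConvexGeometry A cl)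
    {C T : Set α} (hCA : C ⊆ A) (hC : cl C = C) (hTA : T ⊆ A) (hT : cl T = T)
    (hCT : C ⊂ T) :
    ∃ p, p ∈ T ∧ p ∉ C ∧ cl (insert p C) = insert p C ∧ insert p C ⊆ T := by
  obtain ⟨hext, hsub, hmono, hidem, hempty, hae⟩ := hcl
  set 𝒮 : Set (Set α) := {S | cl S = S ∧ C ⊂ S ∧ S ⊆ T} with h𝒮
  have hfin : 𝒮.Finite := by
    apply (hA.finite_subsets).subset
    intro S hS
    exact hS.2.2.trans hTA
  have hne : 𝒮.Nonempty := ⟨T, hT, hCT, subset_rfl⟩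
  obtain ⟨M, hM, hmin⟩ : ∃ a ∈ 𝒮, ∀ a' ∈ 𝒮, id a' ≤ id a → id a = id a' := by
    obtain ⟨a, ha, h⟩ := hfin.exists_minimalFor id 𝒮 hne
    exact ⟨a, ha, fun a' ha' hle => le_antisymm (h ha' hle) hle⟩
  obtain ⟨hMcl, hCM, hMT⟩ := hM
  have hMA : M ⊆ A := hMT.trans hTA
  -- every point of M \ C generates all of M over C
  have hgen : ∀ u ∈ M, u ∉ C → cl (insert u C) = M := by
    intro u huM huC
    have h1 : cl (insert u C) ⊆ M := by
      calc cl (insert u C) ⊆ cl M := hmono _ _ (Set.insert_subset huM hCM.1) hMA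
        _ = M := hMcl
    have h2 : insert u C ⊆ cl (insert u C) := hext _ ((Set.insert_subset huM hCM.1).trans hMA)
    have h3 : cl (insert u C) ∈ 𝒮 := by
      refine ⟨hidem _ ((Set.insert_subset huM hCM.1).trans hMA), ?_, h1.trans hMT⟩
      refine ⟨(Set.subset_insert u C).trans h2, ?_⟩
      intro hsub'
      exact huC (hsub' (h2 (Set.mem_insert u C)))
    exact (hmin _ h3 h1).symm
  have hss : (M \ C).Subsingleton := by
    by_contra hns
    rw [Set.not_subsingleton_iff] at hns
    obtain ⟨u, hu, v, hv, huv⟩ := hns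
    have huA : u ∈ A := hMA hu.1
    have hvA : v ∈ A := hMA hv.1
    have hucv : u ∈ cl (C ∪ {v}) := by
      rw [Set.union_singleton, hgen v hv.1 hv.2]; exact hu.1
    have := hae u huA v hvA huv C hCA hC hucv hu.2
    rw [Set.union_singleton, hgen u hu.1 hu.2] at this
    exact this hv.1
  have hneD : (M \ C).Nonempty := Set.nonempty_of_ssubset hCM
  obtain ⟨p, hp⟩ := hneD
  have hMeq : M = insert p C := by
    apply Set.eq_of_subset_of_subset
    · intro z hzM
      by_cases hzC : z ∈ C
      · exact Set.mem_insert_of_mem _ hzC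
      · rw [hss ⟨hzM, hzC⟩ hp]; exact Set.mem_insert _ _
    · exact Set.insert_subset hp.1 hCM.1
  exact ⟨p, hMT hp.1, hp.2, by rw [← hMeq]; exact hMcl, by rw [← hMeq]; exact hMT⟩

/-- Downward peel: a nonempty closed set has an extreme point. -/
lemma exists_peel (hA : A.Finite) (hcl : IsConvexGeometry A cl)
    {C : Set α} (hCA : C ⊆ A) (hC : cl C = C) (hne : C.Nonempty) :
    ∃ e ∈ C, cl (C \ {e}) = C \ {e} := by
  obtain ⟨hext, hsub, hmono, hidem, hempty, hae⟩ := hcl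
  set 𝒮 : Set (Set α) := {S | cl S = S ∧ S ⊂ C} with h𝒮
  have hfin : 𝒮.Finite := by
    apply (hA.finite_subsets).subset
    intro S hS
    exact hS.2.1.trans hCA
  have hne' : 𝒮.Nonempty := ⟨∅, hempty, Set.empty_ssubset.mpr hne⟩
  obtain ⟨M, hM, hmax⟩ : ∃ a ∈ 𝒮, ∀ a' ∈ 𝒮, id a ≤ id a' → id a = id a' := by
    obtain ⟨a, ha, h⟩ := hfin.exists_maximalFor id 𝒮 hne'
    exact ⟨a, ha, fun a' ha' hle => le_antisymm hle (h ha' hle)⟩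
  obtain ⟨hMcl, hMC⟩ := hM
  have hMA : M ⊆ A := hMC.1.trans hCA
  have hgen : ∀ u ∈ C, u ∉ M → cl (insert u M) = C := by
    intro u huC huM
    have hins : insert u M ⊆ A := (Set.insert_subset huC hMC.1).trans hCA
    have h1 : cl (insert u M) ⊆ C := by
      calc cl (insert u M) ⊆ cl C := hmono _ _ (Set.insert_subset huC hMC.1) hCA
        _ = C := hC
    have h2 : insert u M ⊆ cl (insert u M) := hext _ hins
    rcases eq_or_ne (cl (insert u M)) C with h | h
    · exact h
    · exfalso
      have : cl (insert u M) ∈ 𝒮 := ⟨hidem _ hins, lt_of_le_of_ne h1 h⟩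
      have heq := hmax _ this ((Set.subset_insert u M).trans h2)
      simp only [id] at heq
      exact huM (by rw [heq]; exact h2 (Set.mem_insert u M))
  have hss : (C \ M).Subsingleton := by
    by_contra hns
    rw [Set.not_subsingleton_iff] at hns
    obtain ⟨u, hu, v, hv, huv⟩ := hns
    have hucv : u ∈ cl (M ∪ {v}) := by
      rw [Set.union_singleton, hgen v hv.1 hv.2]; exact hu.1
    have := hae u (hCA hu.1) v (hCA hv.1) huv M hMA hMcl hucv hu.2
    rw [Set.union_singleton, hgen u hu.1 hu.2] at this
    exact this hv.1
  obtain ⟨e, he⟩ := Set.nonempty_of_ssubset hMC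
  have hMeq : M = C \ {e} := by
    apply Set.eq_of_subset_of_subset
    · intro z hzM
      exact ⟨hMC.1 hzM, fun hze => he.2 (by rw [← Set.mem_singleton_iff.mp hze]; exact hzM)⟩
    · intro z hz
      by_contra hzM
      exact hz.2 (hss ⟨hz.1, hzM⟩ he)
  exact ⟨e, he.1, by rw [← hMeq]; exact hMcl⟩

/-- Every point is an extreme point of its own closure. -/
lemma self_extreme (hA : A.Finite) (hcl : IsConvexGeometry A cl)
    {x : α} (hx : x ∈ A) : cl (cl {x} \ {x}) = cl {x} \ {x} := by
  obtain ⟨hext, hsub, hmono, hidem, hempty, hae⟩ := hcl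
  have hxA : ({x} : Set α) ⊆ A := Set.singleton_subset_iff.mpr hx
  set W : Set α := cl {x} \ {x} with hW
  have hWA : W ⊆ A := (Set.diff_subset).trans (hsub _ hxA)
  by_cases hxW : x ∈ cl W
  · exfalso
    set 𝒮 : Set (Set α) := {S | S ⊆ W ∧ x ∈ cl S} with h𝒮
    have hfin : 𝒮.Finite := (hA.finite_subsets).subset (fun S hS => hS.1.trans hWA)
    have hne : 𝒮.Nonempty := ⟨W, subset_rfl, hxW⟩
    obtain ⟨S, hS, hmin⟩ : ∃ a ∈ 𝒮, ∀ a' ∈ 𝒮, id a' ≤ id a → id a = id a' := by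
      obtain ⟨a, ha, h⟩ := hfin.exists_minimalFor id 𝒮 hne
      exact ⟨a, ha, fun a' ha' hle => le_antisymm (h ha' hle) hle⟩
    obtain ⟨hSW, hxS⟩ := hS
    have hSA : S ⊆ A := hSW.trans hWA
    rcases Set.eq_empty_or_nonempty S with hSe | ⟨y, hyS⟩
    · rw [hSe, hempty] at hxS; exact hxS
    · have hyW : y ∈ W := hSW hyS
      have hyx : y ≠ x := hyW.2
      have hSyA : S \ {y} ⊆ A := (Set.diff_subset).trans hSA
      have hxnotin : x ∉ cl (S \ {y}) := by
        intro hcon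
        have hmem : S \ {y} ∈ 𝒮 := ⟨(Set.diff_subset).trans hSW, hcon⟩
        have := hmin _ hmem (Set.diff_subset)
        simp only [id] at this
        have : y ∈ S \ {y} := by rw [← this]; exact hyS
        exact this.2 rfl
      set X₀ : Set α := cl (S \ {y}) with hX₀
      have hX₀A : X₀ ⊆ A := hsub _ hSyA
      have hX₀cl : cl X₀ = X₀ := hidem _ hSyA
      have hxcl : x ∈ cl (X₀ ∪ {y}) := by
        have hsub1 : S ⊆ X₀ ∪ {y} := by
          intro z hz
          by_cases hzy : z = y
          · exact Or.inr (by rw [hzy]; rfl)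
          · exact Or.inl (hext _ hSyA ⟨hz, hzy⟩)
        exact hmono _ _ hsub1 (Set.union_subset hX₀A (Set.singleton_subset_iff.mpr (hSA hyS))) hxS
      have := hae x hx y (hSA hyS) (Ne.symm hyx) X₀ hX₀A hX₀cl hxcl hxnotin
      apply this
      have : ({x} : Set α) ⊆ X₀ ∪ {x} := Set.subset_union_right
      exact hmono _ _ this (Set.union_subset hX₀A hxA) (hyW.1)
  · apply Set.eq_of_subset_of_subset
    · intro z hz
      have hzclx : z ∈ cl {x} := by
        have h1 : cl W ⊆ cl (cl {x}) := hmono _ _ (Set.diff_subset) (hsub _ hxA)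
        rw [hidem _ hxA] at h1
        exact h1 hz
      refine ⟨hzclx, ?_⟩
      intro hzx
      apply hxW
      rw [← Set.mem_singleton_iff.mp hzx]
      exact hz
    · exact hext _ hWA

/-- Every closed set is chainable. -/
lemma ch_closed (hA : A.Finite) (hcl : IsConvexGeometry A cl)
    {C : Set α} (hCA : C ⊆ A) (hC : cl C = C) : Ch A cl C := by
  have key : ∀ n : ℕ, ∀ C : Set α, (A \ C).ncard = n → C ⊆ A → cl C = C → Ch A cl C := by
    intro n
    induction n using Nat.strong_induction_on with
    | _ n ih =>
      intro C hn hCA hC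
      rcases eq_or_ne C A with hCA' | hCA'
      · rw [hCA']; exact Ch.top
      · have hCT : C ⊂ A := lt_of_le_of_ne hCA hCA'
        obtain ⟨p, hpT, hpC, hpcl, hpsub⟩ := exists_cover hA hcl hCA hC subset_rfl
          (by obtain ⟨hext, hsub, hmono, hidem, hempty, hae⟩ := hcl
              exact Set.eq_of_subset_of_subset (hsub _ subset_rfl) (hext _ subset_rfl)) hCT
        have hlt : (A \ insert p C).ncard < n := by
          rw [← hn]
          apply Set.ncard_lt_ncard _ hA.diff
          constructor
          · intro z hz
            exact ⟨hz.1, fun hzC => hz.2 (Set.mem_insert_of_mem _ hzC)⟩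
          · intro hcon
            exact (hcon ⟨hpT, hpC⟩).2 (Set.mem_insert _ _)
        have hch : Ch A cl (insert p C) := ih _ hlt _ rfl hpsub hpcl
        refine Ch.step _ _ hch (Set.subset_insert p C) (jc_closed hcl hCA hC) ?_
        apply Set.Subsingleton.anti (Set.subsingleton_singleton (a := p))
        intro z hz
        rcases hz.1 with h | h
        · exact h
        · exact absurd h hz.2
  exact key _ C rfl hCA hC

/-- Every singleton from `A` is chainable. -/
lemma ch_singleton (hA : A.Finite) (hcl : IsConvexGeometry A cl)
    {x : α} (hx : x ∈ A) : Ch A cl {x} := by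
  have hcl' := hcl
  obtain ⟨hext, hsub, hmono, hidem, hempty, hae⟩ := hcl'
  have hxA : ({x} : Set α) ⊆ A := Set.singleton_subset_iff.mpr hx
  set W : Set α := cl {x} \ {x} with hWdef
  have hWcl : cl W = W := self_extreme hA hcl hx
  have hWA : W ⊆ A := Set.diff_subset.trans (hsub _ hxA)
  have hxcl : x ∈ cl {x} := hext _ hxA rfl
  have hxWtop : ({x} : Set α) ∪ W = cl {x} := by
    apply Set.eq_of_subset_of_subset
    · exact Set.union_subset (Set.singleton_subset_iff.mpr hxcl) Set.diff_subset
    · intro z hz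
      by_cases hzx : z = x
      · exact Or.inl (by rw [hzx]; rfl)
      · exact Or.inr ⟨hz, hzx⟩
  have key : ∀ n : ℕ, ∀ F : Set α, (W \ F).ncard = n → cl F = F → F ⊆ W →
      Ch A cl ({x} ∪ F) := by
    intro n
    induction n using Nat.strong_induction_on with
    | _ n ih =>
      intro F hn hF hFW
      have hFA : F ⊆ A := hFW.trans hWA
      rcases eq_or_ne F W with hFe | hFne
      · rw [hFe, hxWtop]
        exact ch_closed hA hcl (hsub _ hxA) (hidem _ hxA)
      · have hFss : F ⊂ W := lt_of_le_of_ne hFW hFne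
        obtain ⟨p, hpW, hpF, hpcl, hpsub⟩ := exists_cover hA hcl hFA hF hWA hWcl hFss
        have hlt : (W \ insert p F).ncard < n := by
          rw [← hn]
          apply Set.ncard_lt_ncard _ (hA.subset hWA).diff
          constructor
          · intro z hz
            exact ⟨hz.1, fun hzF => hz.2 (Set.mem_insert_of_mem _ hzF)⟩
          · intro hcon
            exact (hcon ⟨hpW, hpF⟩).2 (Set.mem_insert _ _)
        have hch : Ch A cl ({x} ∪ insert p F) := ih _ hlt _ rfl hpcl hpsub
        refine Ch.step _ _ hch (Set.union_subset_union_right _ (Set.subset_insert p F)) ?_ ?_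
        · -- JC ({x} ∪ F)
          intro X Y hXA' hX hXD hYA' hY hYD
          have hnox : ∀ Z : Set α, Z ⊆ A → cl Z = Z → Z ⊆ {x} ∪ F → Z ⊆ F := by
            intro Z hZA hZ hZD
            by_cases hxZ : x ∈ Z
            · exfalso
              have h1 : cl {x} ⊆ Z := by
                have := hmono {x} Z (Set.singleton_subset_iff.mpr hxZ) hZA
                rwa [hZ] at this
              apply hFne
              apply Set.eq_of_subset_of_subset hFW
              intro w hw
              rcases hZD (h1 hw.1) with h | h
              · exact absurd h hw.2
              · exact h
            · intro z hzZ
              rcases hZD hzZ with h | h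
              · exact absurd (Set.mem_singleton_iff.mp h ▸ hzZ) hxZ
              · exact h
          have h2 : cl (X ∪ Y) ⊆ F := by
            have := hmono (X ∪ Y) F
              (Set.union_subset (hnox X hXA' hX hXD) (hnox Y hYA' hY hYD)) hFA
            rwa [hF] at this
          exact h2.trans Set.subset_union_right
        · apply Set.Subsingleton.anti (Set.subsingleton_singleton (a := p))
          intro z hz
          rcases hz.1 with h | h
          · exact absurd (Or.inl h) hz.2
          · rcases h with h | h
            · exact h
            · exact absurd (Or.inr h) hz.2
  have := key _ ∅ rfl hempty (Set.empty_subset W)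
  rwa [Set.union_empty] at this

/-- Chainability is stable under finite intersections (with `A`). -/
lemma ch_sInter (hA : A.Finite) (hcl : IsConvexGeometry A cl)
    (𝔉 : Set (Set α)) (hfin : 𝔉.Finite) (hall : ∀ D ∈ 𝔉, Ch A cl D) :
    Ch A cl (A ∩ ⋂₀ 𝔉) := by
  refine Set.Finite.induction_on (motive := fun 𝔊 _ => (∀ D ∈ 𝔊, Ch A cl D) → Ch A cl (A ∩ ⋂₀ 𝔊))
    𝔉 hfin ?_ ?_ hall
  · intro _
    rw [Set.sInter_empty, Set.inter_univ]
    exact Ch.top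
  · intro D 𝔉' hD hfin' ih hall'
    rw [Set.sInter_insert]
    have heq : A ∩ (D ∩ ⋂₀ 𝔉') = D ∩ (A ∩ ⋂₀ 𝔉') := by
      ext z; constructor
      · rintro ⟨h1, h2, h3⟩; exact ⟨h2, h1, h3⟩
      · rintro ⟨h1, h2, h3⟩; exact ⟨h2, h1, h3⟩
    rw [heq]
    exact ch_inter hcl (hall' D (Set.mem_insert _ _))
      (ih (fun E hE => hall' E (Set.mem_insert_of_mem _ hE)))

/-- Accessibility: a proper chainable set extends by one point. -/
lemma ch_acc {D : Set α} (h : Ch A cl D) (hne : D ≠ A) :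
    ∃ p, p ∈ A ∧ p ∉ D ∧ Ch A cl (insert p D) := by
  induction h with
  | top => exact absurd rfl hne
  | step S T hS hTS hJC hss ih =>
      rcases hss.eq_empty_or_singleton with he | ⟨p, hp⟩
      · have hST : S = T := Set.eq_of_subset_of_subset (by
          intro z hz
          by_contra hzT
          exact (Set.eq_empty_iff_forall_notMem.mp he z) ⟨hz, hzT⟩) hTS
        rw [← hST] at hne ⊢
        exact ih hne
      · have hpS : p ∈ S \ T := by rw [hp]; rfl
        refine ⟨p, ch_subset hS hpS.1, hpS.2, ?_⟩
        have : insert p T = S := by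
          apply Set.eq_of_subset_of_subset (Set.insert_subset hpS.1 hTS)
          intro z hz
          by_cases hzT : z ∈ T
          · exact Set.mem_insert_of_mem _ hzT
          · have : z ∈ S \ T := ⟨hz, hzT⟩
            rw [hp] at this
            rw [Set.mem_singleton_iff.mp this]
            exact Set.mem_insert _ _
        rw [this]
        exact hS

/-- KLS exchange: if `E ⊄ D`, some point of `E \ D` can be removed from `E` keeping chainability. -/
lemma ch_shrink (hA : A.Finite) (hcl : IsConvexGeometry A cl) :
    ∀ n : ℕ, ∀ D E : Set α, (A \ D).ncard = n → Ch A cl D → Ch A cl E → ¬ (E ⊆ D) →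
      ∃ x, x ∈ E ∧ x ∉ D ∧ Ch A cl (E \ {x}) := by
  intro n
  induction n using Nat.strong_induction_on with
  | _ n ih =>
    intro D E hn hD hE hED
    have hDne : D ≠ A := by
      intro hcon
      exact hED (by rw [hcon]; exact ch_subset hE)
    obtain ⟨p, hpA, hpD, hpCh⟩ := ch_acc hD hDne
    by_cases hEp : E ⊆ insert p D
    · have hpE : p ∈ E := by
        by_contra hpE
        apply hED
        intro z hz
        rcases hEp hz with h | h
        · exact absurd (Set.mem_singleton_iff.mp h ▸ hz) hpE
        · exact h
      refine ⟨p, hpE, hpD, ?_⟩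
      have heq : E \ {p} = E ∩ D := by
        ext z
        constructor
        · intro hz
          rcases hEp hz.1 with h | h
          · exact absurd (Set.mem_singleton_iff.mp h) hz.2
          · exact ⟨hz.1, h⟩
        · intro hz
          exact ⟨hz.1, fun hzp => hpD (Set.mem_singleton_iff.mp hzp ▸ hz.2)⟩
      rw [heq]
      exact ch_inter hcl hE hD
    · have hlt : (A \ insert p D).ncard < n := by
        rw [← hn]
        apply Set.ncard_lt_ncard _ hA.diff
        constructor
        · intro z hz
          exact ⟨hz.1, fun hzD => hz.2 (Set.mem_insert_of_mem _ hzD)⟩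
        · intro hcon
          exact (hcon ⟨hpA, hpD⟩).2 (Set.mem_insert _ _)
      obtain ⟨x, hxE, hxD, hxCh⟩ := ih _ hlt _ _ rfl hpCh hE hEp
      exact ⟨x, hxE, fun h => hxD (Set.mem_insert_of_mem _ h), hxCh⟩

/-- Separation: if `x ≠ y` both lie in `E \ D` (both chainable, `D ⊆ E`), some chainable
set over `D` contains exactly one of them. -/
lemma ch_sep (hA : A.Finite) (hcl : IsConvexGeometry A cl) :
    ∀ n : ℕ, ∀ D E : Set α, (E \ D).ncard = n → Ch A cl D → Ch A cl E → D ⊆ E →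
      ∀ x y : α, x ∈ E → x ∉ D → y ∈ E → y ∉ D → x ≠ y →
      ∃ W, Ch A cl W ∧ D ⊆ W ∧ ((x ∈ W ∧ y ∉ W) ∨ (y ∈ W ∧ x ∉ W)) := by
  intro n
  induction n using Nat.strong_induction_on with
  | _ n ih =>
    intro D E hn hD hE hDE x y hxE hxD hyE hyD hxy
    have hED : ¬ (E ⊆ D) := fun h => hxD (h hxE)
    obtain ⟨p, hpE, hpD, hpCh⟩ := ch_shrink hA hcl _ D E rfl hD hE hED
    rcases eq_or_ne p x with hpx | hpx
    · refine ⟨E \ {x}, by rw [← hpx]; exact hpCh, ?_, Or.inr ⟨⟨hyE, hxy.symm⟩, fun h => h.2 rfl⟩⟩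
      intro z hz
      exact ⟨hDE hz, fun hzx => hxD (Set.mem_singleton_iff.mp hzx ▸ hz)⟩
    · rcases eq_or_ne p y with hpy | hpy
      · refine ⟨E \ {y}, by rw [← hpy]; exact hpCh, ?_, Or.inl ⟨⟨hxE, hxy⟩, fun h => h.2 rfl⟩⟩
        intro z hz
        exact ⟨hDE hz, fun hzy => hyD (Set.mem_singleton_iff.mp hzy ▸ hz)⟩
      · have hlt : ((E \ {p}) \ D).ncard < n := by
          rw [← hn]
          apply Set.ncard_lt_ncard _ (hA.subset (ch_subset hE)).diff
          constructor
          · intro z hz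
            exact ⟨hz.1.1, hz.2⟩
          · intro hcon
            exact (hcon ⟨hpE, hpD⟩).1.2 rfl
        exact ih _ hlt D (E \ {p}) rfl hD hpCh
          (fun z hz => ⟨hDE hz, fun hzp => hpD (Set.mem_singleton_iff.mp hzp ▸ hz)⟩)
          x y ⟨hxE, fun h => hpx (Set.mem_singleton_iff.mp h).symm⟩ hxD
          ⟨hyE, fun h => hpy (Set.mem_singleton_iff.mp h).symm⟩ hyD hxy

end Stmt14

/-- every finite convex geometry `(A, cl)` has a strong atomistic
extension: a convex geometry `τ` on the same set `A` in which every singleton is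
closed, every `cl`-closed set is `τ`-closed, and `cl (X ∪ Y) = τ (X ∪ Y)` for all
`cl`-closed `X, Y`.  In particular, every finite convex geometry is a sub-geometry
of a finite atomistic convex geometry. -/
theorem stmt_14 {α : Type*} (A : Set α) (hA : A.Finite)
    (cl : Set α → Set α) (hcl : IsConvexGeometry A cl) :
    ∃ τ : Set α → Set α,
      IsConvexGeometry A τ ∧
      (∀ a ∈ A, τ {a} = {a}) ∧
      (∀ X : Set α, X ⊆ A → cl X = X → τ X = X) ∧
      (∀ X Y : Set α, X ⊆ A → cl X = X → Y ⊆ A → cl Y = Y →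
        cl (X ∪ Y) = τ (X ∪ Y)) := by
  classical
  open Stmt14 in
  have hcl' := hcl
  obtain ⟨hext, hsub, hmono, hidem, hempty, hae⟩ := hcl'
  set Fam : Set α → Set (Set α) := fun S => {D | Ch A cl D ∧ S ∩ A ⊆ D} with hFam
  set τ : Set α → Set α := fun S => A ∩ ⋂₀ Fam S with hτ
  have hFamFin : ∀ S, (Fam S).Finite :=
    fun S => (hA.finite_subsets).subset (fun D hD => ch_subset hD.1)
  have tau_ch : ∀ S, Ch A cl (τ S) :=
    fun S => ch_sInter hA hcl (Fam S) (hFamFin S) (fun D hD => hD.1)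
  have tau_min : ∀ S D : Set α, Ch A cl D → S ∩ A ⊆ D → τ S ⊆ D :=
    fun S D h1 h2 => (Set.inter_subset_right).trans (Set.sInter_subset_of_mem ⟨h1, h2⟩)
  have tau_subA : ∀ S, τ S ⊆ A := fun S => Set.inter_subset_left
  have tau_sup : ∀ S, S ∩ A ⊆ τ S :=
    fun S => Set.subset_inter Set.inter_subset_right
      (Set.subset_sInter (fun D hD => hD.2))
  have tau_sup' : ∀ S : Set α, S ⊆ A → S ⊆ τ S := by
    intro S hS
    have := tau_sup S
    rwa [Set.inter_eq_self_of_subset_left hS] at this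
  have tau_closed : ∀ X : Set α, X ⊆ A → cl X = X → τ X = X := by
    intro X hXA hX
    exact Set.eq_of_subset_of_subset
      (tau_min X X (ch_closed hA hcl hXA hX) Set.inter_subset_left) (tau_sup' X hXA)
  refine ⟨τ, ⟨?_, ?_, ?_, ?_, ?_, ?_⟩, ?_, tau_closed, ?_⟩
  · -- extensive
    exact fun Y hY => tau_sup' Y hY
  · -- valued in A
    exact fun Y _ => tau_subA Y
  · -- monotone
    intro Y Z hYZ hZA
    exact tau_min Y (τ Z) (tau_ch Z)
      ((Set.inter_subset_inter_left A hYZ).trans (tau_sup Z))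
  · -- idempotent
    intro Y hY
    apply Set.eq_of_subset_of_subset
    · exact tau_min (τ Y) (τ Y) (tau_ch Y) Set.inter_subset_left
    · exact tau_sup' (τ Y) (tau_subA Y)
  · -- zero-closed
    apply Set.eq_of_subset_of_subset
    · exact tau_min ∅ ∅ (ch_closed hA hcl (Set.empty_subset A) hempty)
        Set.inter_subset_left
    · exact Set.empty_subset _
  · -- anti-exchange
    intro x hx y hy hxy X hXA hXcl hxmem hxX hycon
    have hChX : Ch A cl X := hXcl ▸ tau_ch X
    have hyX : y ∉ X := by
      intro hyX
      have hXy : X ∪ {y} = X := by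
        rw [Set.union_singleton, Set.insert_eq_self.mpr hyX]
      rw [hXy, hXcl] at hxmem
      exact hxX hxmem
    have hXxA : X ∪ {x} ⊆ A := Set.union_subset hXA (Set.singleton_subset_iff.mpr hx)
    have hXyA : X ∪ {y} ⊆ A := Set.union_subset hXA (Set.singleton_subset_iff.mpr hy)
    have hXR : X ∪ {x} ⊆ τ (X ∪ {x}) := tau_sup' _ hXxA
    have hXsubR : X ⊆ τ (X ∪ {x}) := Set.subset_union_left.trans hXR
    have hxR : x ∈ τ (X ∪ {x}) := hXR (Or.inr rfl)
    have hyR : y ∈ τ (X ∪ {x}) := hycon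
    obtain ⟨W, hChW, hXW, hcase⟩ := ch_sep hA hcl ((τ (X ∪ {x}) \ X).ncard) X (τ (X ∪ {x}))
      rfl hChX (tau_ch _) hXsubR x y hxR hxX hyR hyX hxy
    rcases hcase with ⟨hxW, hyW⟩ | ⟨hyW, hxW⟩
    · -- R ⊆ W, but y ∈ R, y ∉ W
      apply hyW
      have hR : τ (X ∪ {x}) ⊆ W := by
        apply tau_min _ _ hChW
        intro z hz
        rcases hz.1 with h | h
        · exact hXW h
        · rw [Set.mem_singleton_iff.mp h]; exact hxW
      exact hR hyR
    · -- τ(X ∪ {y}) ⊆ W, but x ∈ τ(X ∪ {y}), x ∉ W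
      apply hxW
      have hR : τ (X ∪ {y}) ⊆ W := by
        apply tau_min _ _ hChW
        intro z hz
        rcases hz.1 with h | h
        · exact hXW h
        · rw [Set.mem_singleton_iff.mp h]; exact hyW
      exact hR hxmem
  · -- atomistic
    intro a ha
    apply Set.eq_of_subset_of_subset
    · exact tau_min {a} {a} (ch_singleton hA hcl ha) Set.inter_subset_left
    · exact tau_sup' {a} (Set.singleton_subset_iff.mpr ha)
  · -- joins preserved
    intro X Y hXA hX hYA hY
    have hXYA : X ∪ Y ⊆ A := Set.union_subset hXA hYA
    apply Set.eq_of_subset_of_subset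
    · exact (ch_jc hcl (tau_ch (X ∪ Y))) X Y hXA hX
        (Set.subset_union_left.trans (tau_sup' _ hXYA)) hYA hY
        (Set.subset_union_right.trans (tau_sup' _ hXYA))
    · apply tau_min _ _ (ch_closed hA hcl (hsub _ hXYA) (hidem _ hXYA))
      exact Set.inter_subset_left.trans (hext _ hXYA)
end

section
/- Let G = {a, b, c, d, x} and let cl be the closure operator whose closed sets are 𝒢 = {∅, {a}, {b}, {d}, {a,b}, {a,d}, {b,d}, {c,d}, {a,b,d}, {a,c,d}, {a,b,x}, {a,d,x}, {b,c,d}, {b,c,d,x}, {a,c,d,x}, {a,b,d,x}, {a,b,c,d,x}}. Let τ be the closure operator on G whose closed sets are all subsets of G except {a, b, c, d} (so τ(Z) = Z for every Z ≠ {a,b,c,d}, and τ({a,b,c,d}) = {a,b,c,d,x}). Then: (1) (G, τ) is an atomistic convex geometry; (2) (G, τ) is a strong extension of (G, cl), i.e., every cl-closed set is τ-closed and cl(X ∪ Y) = τ(X ∪ Y) for all cl-closed X, Y (in particular (G, cl) is a sub-geometry of (G, τ)); (3) x ∈ τ({a,b,c,d}) but x ∉ τ(T) for every proper subset T ⊊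 {a,b,c,d} (in particular x ∉ τ({a,b,c}) ∪ τ({a,b,d}) ∪ τ({a,c,d}) ∪ τ({b,c,d})), while x ∈ cl({a,b,c}); so the strong atomistic extension τ does not preserve the Carathéodory-type property of cl. -/
def G5 : Finset (Finset (Fin 5)) :=
  {∅, {0}, {1}, {3}, {0,1}, {0,3}, {1,3}, {2,3}, {0,1,3}, {0,2,3}, {0,1,4},
   {0,3,4}, {1,2,3}, {1,2,3,4}, {0,2,3,4}, {0,1,3,4}, {0,1,2,3,4}}

lemma hd1 : ∀ s ∈ G5, ∀ t ∈ G5, s ∪ t ∈ G5 ∨ s ∪ t = ({0,1,2,3} : Finset (Fin 5)) := by decide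
lemma hd2 : ({0,1,2,3} : Finset (Fin 5)) ∉ G5 := by decide
lemma hd3 : ∀ s ∈ G5, ({0,1,2,3} : Finset (Fin 5)) ⊆ s → s = {0,1,2,3,4} := by decide
lemma hd4 : ∀ s ∈ G5, ({0,1,2} : Finset (Fin 5)) ⊆ s → 4 ∈ s := by decide
lemma hd5 : ({0,1,2,3,4} : Finset (Fin 5)) ∈ G5 := by decide

def emap {α : Type*} (a b c d x : α) : Fin 5 → α := ![a,b,c,d,x]

lemma emap_inj {α : Type*} {a b c d x : α}
    (hab : a ≠ b) (hac : a ≠ c) (had : a ≠ d) (hax : a ≠ x)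
    (hbc : b ≠ c) (hbd : b ≠ d) (hbx : b ≠ x)
    (hcd : c ≠ d) (hcx : c ≠ x) (hdx : d ≠ x) :
    Function.Injective (emap a b c d x) := by
  intro i j hij
  fin_cases i <;> fin_cases j <;> simp_all [emap]

lemma emap_img_S {α : Type*} (a b c d x : α) :
    emap a b c d x '' ↑({0,1,2,3} : Finset (Fin 5)) = {a,b,c,d} := by
  simp [emap, Finset.coe_insert, Set.image_insert_eq]

lemma emap_img_full {α : Type*} (a b c d x : α) :
    emap a b c d x '' ↑({0,1,2,3,4} : Finset (Fin 5)) = {a,b,c,d,x} := by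
  simp [emap, Finset.coe_insert, Set.image_insert_eq]

lemma emap_img_abc {α : Type*} (a b c d x : α) :
    emap a b c d x '' ↑({0,1,2} : Finset (Fin 5)) = {a,b,c} := by
  simp [emap, Finset.coe_insert, Set.image_insert_eq]

lemma emap_four {α : Type*} (a b c d x : α) : emap a b c d x 4 = x := by
  simp [emap]

lemma emap_img_G5 {α : Type*} (a b c d x : α) :
    (fun s : Finset (Fin 5) => emap a b c d x '' ↑s) '' ↑G5 =
      ({(∅ : Set α), {a}, {b}, {d}, {a, b}, {a, d}, {b, d}, {c, d},
        {a, b, d}, {a, c, d}, {a, b, x}, {a, d, x}, {b, c, d},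
        {b, c, d, x}, {a, c, d, x}, {a, b, d, x}, {a, b, c, d, x}} : Set (Set α)) := by
  simp [G5, emap, Finset.coe_insert, Set.image_insert_eq]


/-- the atomistic strong extension `τ` of the five-element convex
geometry `(G, cl)` (`τ Z = Z` for `Z ≠ {a,b,c,d}` and `τ {a,b,c,d} = {a,b,c,d,x}`):
`(G, τ)` is an atomistic convex geometry and a strong extension of `(G, cl)`, but
`x ∈ τ {a,b,c,d}` while `x ∉ τ T` for every proper `T ⊊ {a,b,c,d}`, although
`x ∈ cl {a,b,c}`; so the strong atomistic extension does not preserve the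
Carathéodory-type property of `cl`. -/
theorem stmt_16 {α : Type*} (a b c d x : α)
    (hab : a ≠ b) (hac : a ≠ c) (had : a ≠ d) (hax : a ≠ x)
    (hbc : b ≠ c) (hbd : b ≠ d) (hbx : b ≠ x)
    (hcd : c ≠ d) (hcx : c ≠ x) (hdx : d ≠ x)
    (𝒢 : Set (Set α))
    (h𝒢 : 𝒢 = {(∅ : Set α), {a}, {b}, {d}, {a, b}, {a, d}, {b, d}, {c, d},
               {a, b, d}, {a, c, d}, {a, b, x}, {a, d, x}, {b, c, d},
               {b, c, d, x}, {a, c, d, x}, {a, b, d, x}, {a, b, c, d, x}})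
    (cl : Set α → Set α)
    (hcl : ∀ Z : Set α, cl Z = ⋂₀ {W | W ∈ 𝒢 ∧ Z ⊆ W})
    (τ : Set α → Set α)
    (hτ : ∀ Z : Set α, τ Z = Z ∪ {w | Z = ({a, b, c, d} : Set α) ∧ w = x}) :
    -- (1) (G, τ) is an atomistic convex geometry
    IsConvexGeometry {a, b, c, d, x} τ ∧
    (∀ g ∈ ({a, b, c, d, x} : Set α), τ {g} = {g}) ∧
    -- (2) (G, τ) is a strong extension of (G, cl)
    (∀ X : Set α, X ∈ 𝒢 → τ X = X) ∧
    (∀ X Y : Set α, X ∈ 𝒢 → Y ∈ 𝒢 → cl (X ∪ Y) = τ (X ∪ Y)) ∧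
    -- (3) the Carathéodory-type property fails for τ although it holds for cl
    (x ∈ τ {a, b, c, d}) ∧
    (∀ T : Set α, T ⊂ {a, b, c, d} → x ∉ τ T) ∧
    (x ∈ cl {a, b, c}) := by
  have hxS : x ∉ ({a,b,c,d} : Set α) := by
    simp only [Set.mem_insert_iff, Set.mem_singleton_iff]
    push_neg
    exact ⟨hax.symm, hbx.symm, hcx.symm, hdx.symm⟩
  -- basic facts about τ
  have htau1 : ∀ Z : Set α, Z ≠ {a,b,c,d} → τ Z = Z := by
    intro Z hZ
    rw [hτ]
    have : {w | Z = ({a,b,c,d} : Set α) ∧ w = x} = (∅ : Set α) := by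
      ext w; simp [hZ]
    rw [this, Set.union_empty]
  have htau2 : τ {a,b,c,d} = {a,b,c,d,x} := by
    rw [hτ]
    ext w
    simp only [Set.mem_union, Set.mem_setOf_eq, Set.mem_insert_iff, Set.mem_singleton_iff]
    tauto
  -- the embedding of Fin 5
  have he : Function.Injective (emap a b c d x) :=
    emap_inj hab hac had hax hbc hbd hbx hcd hcx hdx
  set F : Finset (Fin 5) → Set α := fun s => emap a b c d x '' ↑s with hF_def
  have hFinj : ∀ s t : Finset (Fin 5), F s = F t → s = t := by
    intro s t h
    exact Finset.coe_injective (Set.image_injective.mpr he h)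
  have hFmono : ∀ s t : Finset (Fin 5), F s ⊆ F t → s ⊆ t := by
    intro s t h
    exact_mod_cast (Set.image_subset_image_iff he).mp h
  have hFunion : ∀ s t : Finset (Fin 5), F (s ∪ t) = F s ∪ F t := by
    intro s t
    simp [hF_def, Set.image_union]
  have hFS : F {0,1,2,3} = {a,b,c,d} := emap_img_S a b c d x
  have hFfull : F {0,1,2,3,4} = {a,b,c,d,x} := emap_img_full a b c d x
  have hFabc : F {0,1,2} = {a,b,c} := emap_img_abc a b c d x
  have h𝒢F : 𝒢 = F '' ↑G5 := by
    rw [h𝒢, hF_def, emap_img_G5]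
  -- members of 𝒢 are not equal to S
  have hmemne : ∀ X ∈ 𝒢, X ≠ ({a,b,c,d} : Set α) := by
    intro X hX
    rw [h𝒢F] at hX
    obtain ⟨s, hs, rfl⟩ := hX
    intro h
    rw [← hFS] at h
    exact hd2 (hFinj _ _ h ▸ hs)
  have htauG : ∀ X ∈ 𝒢, τ X = X := fun X hX => htau1 X (hmemne X hX)
  -- cl fixes members of 𝒢
  have hclG : ∀ X ∈ 𝒢, cl X = X := by
    intro X hX
    rw [hcl]
    apply subset_antisymm
    · exact Set.sInter_subset_of_mem ⟨hX, subset_rfl⟩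
    · intro w hw
      rintro W ⟨-, hXW⟩
      exact hXW hw
  -- cl of S is the full set
  have hclS : cl ({a,b,c,d} : Set α) = {a,b,c,d,x} := by
    rw [hcl]
    apply subset_antisymm
    · apply Set.sInter_subset_of_mem
      constructor
      · rw [h𝒢]; simp
      · intro w hw; simp only [Set.mem_insert_iff, Set.mem_singleton_iff] at hw ⊢; tauto
    · intro w hw
      rintro W ⟨hW, hSW⟩
      rw [h𝒢F] at hW
      obtain ⟨s, hs, rfl⟩ := hW
      rw [← hFS] at hSW
      have := hd3 s hs (hFmono _ _ hSW)
      rw [this, hFfull]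
      exact hw
  -- misc facts
  have hSsubfull : ({a,b,c,d} : Set α) ⊆ {a,b,c,d,x} := by
    intro w hw; simp only [Set.mem_insert_iff, Set.mem_singleton_iff] at hw ⊢; tauto
  have hSnefull : ({a,b,c,d} : Set α) ≠ ({a,b,c,d,x} : Set α) := by
    intro h
    exact hxS (h ▸ (by simp : x ∈ ({a,b,c,d,x} : Set α)))
  have hfill : ∀ Z : Set α, Z ⊆ ({a,b,c,d,x} : Set α) → ({a,b,c,d} : Set α) ⊆ Z →
      Z ≠ {a,b,c,d} → x ∈ Z := by
    intro Z hZG hSZ hne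
    by_contra hxZ
    apply hne
    apply subset_antisymm _ hSZ
    intro w hw
    have := hZG hw
    simp only [Set.mem_insert_iff, Set.mem_singleton_iff] at this ⊢
    rcases this with h | h | h | h | h
    · tauto
    · tauto
    · tauto
    · tauto
    · exact absurd (h ▸ hw) hxZ
  refine ⟨⟨?_, ?_, ?_, ?_, ?_, ?_⟩, ?_, htauG, ?_, ?_, ?_, ?_⟩
  · -- extensive
    intro Y _
    rw [hτ]; exact Set.subset_union_left
  · -- valued in A
    intro Y hY
    rw [hτ]
    rintro w (hw | ⟨-, rfl⟩)
    · exact hY hw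
    · simp
  · -- monotone
    intro Y Z hYZ hZA
    by_cases hY : Y = ({a,b,c,d} : Set α)
    · subst hY
      rw [htau2]
      by_cases hZ : Z = ({a,b,c,d} : Set α)
      · rw [hZ, htau2]
      · rw [htau1 Z hZ]
        intro w hw
        simp only [Set.mem_insert_iff, Set.mem_singleton_iff] at hw
        rcases hw with h|h|h|h|h
        · exact hYZ (by simp [h])
        · exact hYZ (by simp [h])
        · exact hYZ (by simp [h])
        · exact hYZ (by simp [h])
        · exact h ▸ hfill Z hZA hYZ hZ
    · rw [htau1 Y hY]
      calc Y ⊆ Z := hYZ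
        _ ⊆ τ Z := by rw [hτ]; exact Set.subset_union_left
  · -- idempotent
    intro Y _
    by_cases hY : Y = ({a,b,c,d} : Set α)
    · subst hY
      rw [htau2, htau1 _ (Ne.symm hSnefull)]
    · rw [htau1 Y hY, htau1 Y hY]
  · -- zero-closed
    have : (∅ : Set α) ≠ {a,b,c,d} := by
      intro h
      exact (h ▸ (by simp : a ∈ ({a,b,c,d} : Set α)) : a ∈ (∅ : Set α))
    exact htau1 ∅ this
  · -- anti-exchange
    intro u _ v _ huv X hXA hXcl hu huX
    have hXne : X ≠ ({a,b,c,d} : Set α) := by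
      intro h
      have h2 := h ▸ hXcl
      rw [htau2] at h2
      exact hSnefull h2.symm
    by_cases hXv : X ∪ {v} = ({a,b,c,d} : Set α)
    · rw [hXv, htau2] at hu
      by_cases hux : u = x
      · subst hux
        have hne : X ∪ {u} ≠ ({a,b,c,d} : Set α) := by
          intro h
          exact hxS (h ▸ (Set.mem_union_right X rfl))
        rw [htau1 _ hne]
        rintro (hv | hv)
        · have : X ∪ {v} = X := Set.union_eq_left.mpr (Set.singleton_subset_iff.mpr hv)
          exact hXne (this.symm.trans hXv)
        · exact huv (Set.mem_singleton_iff.mp hv).symm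
      · exfalso
        have huS : u ∈ ({a,b,c,d} : Set α) := by
          simp only [Set.mem_insert_iff, Set.mem_singleton_iff] at hu ⊢
          tauto
        rw [← hXv] at huS
        rcases huS with h | h
        · exact huX h
        · exact huv (Set.mem_singleton_iff.mp h)
    · rw [htau1 _ hXv] at hu
      rcases hu with h | h
      · exact absurd h huX
      · exact absurd (Set.mem_singleton_iff.mp h) huv
  · -- atomistic
    intro g _
    apply htau1
    intro h
    have hag : a ∈ ({g} : Set α) := h ▸ (by simp : a ∈ ({a,b,c,d} : Set α))
    have hbg : b ∈ ({g} : Set α) := h ▸ (by simp : b ∈ ({a,b,c,d} : Set α))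
    simp only [Set.mem_singleton_iff] at hag hbg
    exact hab (hag ▸ hbg ▸ rfl)
  · -- strong extension: cl (X ∪ Y) = τ (X ∪ Y)
    intro X Y hX hY
    rw [h𝒢F] at hX hY
    obtain ⟨s, hs, rfl⟩ := hX
    obtain ⟨t, ht, rfl⟩ := hY
    rw [← hFunion]
    rcases hd1 s hs t ht with h | h
    · have hmem : F (s ∪ t) ∈ 𝒢 := by rw [h𝒢F]; exact ⟨s ∪ t, h, rfl⟩
      rw [hclG _ hmem, htauG _ hmem]
    · rw [h, hFS, hclS, htau2]
  · -- x ∈ τ S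
    rw [htau2]; simp
  · -- x ∉ τ T for T ⊂ S
    intro T hT
    rw [htau1 T (ne_of_lt hT)]
    intro hxT
    exact hxS (hT.le hxT)
  · -- x ∈ cl {a,b,c}
    rw [hcl]
    rintro W ⟨hW, habcW⟩
    rw [h𝒢F] at hW
    obtain ⟨s, hs, rfl⟩ := hW
    rw [← hFabc] at habcW
    have h4 := hd4 s hs (hFmono _ _ habcW)
    exact ⟨4, by exact_mod_cast h4, emap_four a b c d x⟩
end

section
/- Let a₁, a₂, a₃ ∈ ℝ² be affinely independent points, let y ∈ convexHull ℝ {a₁, a₂, a₃}, and let x ∈ ℝ². If x ∈ convexHull ℝ {y, a₁, a₂} and x ∈ convexHull ℝ {y, a₁, a₃}, then x ∈ convexHull ℝ {y, a₁} (i.e., x lies on the segment joining y and a₁). -/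
open Finset

/-- Extract nonnegative weights summing to 1 from convex hull membership of a
range of a finite family. -/
lemma hull_weights {n : ℕ} {E : Type*} [AddCommGroup E] [Module ℝ E]
    (f : Fin n → E) {x : E} (hx : x ∈ convexHull ℝ (Set.range f)) :
    ∃ w : Fin n → ℝ, (∀ i, 0 ≤ w i) ∧ ∑ i, w i = 1 ∧ ∑ i, w i • f i = x := by
  rw [convexHull_range_eq_exists_affineCombination] at hx
  obtain ⟨s, w, hw0, hw1, hwx⟩ := hx
  refine ⟨(s : Set (Fin n)).indicator w, ?_, ?_, ?_⟩
  · intro i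
    by_cases hi : i ∈ s
    · simpa [Set.indicator_of_mem, hi] using hw0 i hi
    · simp [Set.indicator_of_notMem, hi]
  · rw [Finset.sum_indicator_subset w (Finset.subset_univ s)]; exact hw1
  · have h1 : ∑ i, (s : Set (Fin n)).indicator w i = 1 := by
      rw [Finset.sum_indicator_subset w (Finset.subset_univ s)]; exact hw1
    rw [← Finset.univ.affineCombination_eq_linear_combination f _ h1,
      ← Finset.affineCombination_indicator_subset w f (Finset.subset_univ s)]
    exact hwx

/-- if `a₁, a₂, a₃ ∈ ℝ²` are affinely independent,
`y ∈ convexHull ℝ {a₁, a₂, a₃}`, and `x` belongs to both triangles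
`convexHull ℝ {y, a₁, a₂}` and `convexHull ℝ {y, a₁, a₃}`, then `x` lies on the
segment joining `y` and `a₁`. -/
theorem stmt_17 (a₁ a₂ a₃ : Fin 2 → ℝ)
    (h : AffineIndependent ℝ ![a₁, a₂, a₃])
    (y x : Fin 2 → ℝ)
    (hy : y ∈ convexHull ℝ ({a₁, a₂, a₃} : Set (Fin 2 → ℝ)))
    (hx1 : x ∈ convexHull ℝ ({y, a₁, a₂} : Set (Fin 2 → ℝ)))
    (hx2 : x ∈ convexHull ℝ ({y, a₁, a₃} : Set (Fin 2 → ℝ))) :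
    x ∈ convexHull ℝ ({y, a₁} : Set (Fin 2 → ℝ)) := by
  have hrng : ∀ p q r : Fin 2 → ℝ, ({p, q, r} : Set (Fin 2 → ℝ)) = Set.range ![p, q, r] := by
    intro p q r
    ext z
    constructor
    · rintro (rfl | rfl | rfl)
      exacts [⟨0, rfl⟩, ⟨1, rfl⟩, ⟨2, rfl⟩]
    · rintro ⟨i, rfl⟩
      fin_cases i <;> simp
  rw [hrng] at hy; rw [hrng] at hx1; rw [hrng] at hx2
  obtain ⟨b, hb0, hb1, hby⟩ := hull_weights _ hy
  obtain ⟨w, hw0, hw1, hwx⟩ := hull_weights _ hx1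
  obtain ⟨v, hv0, hv1, hvx⟩ := hull_weights _ hx2
  simp only [Fin.sum_univ_three, Matrix.cons_val_zero, Matrix.cons_val_one, Matrix.head_cons,
    Matrix.cons_val_two, Matrix.tail_cons] at hby hwx hvx hb1 hw1 hv1
  -- barycentric coordinates of x from each representation
  set W : Fin 3 → ℝ := ![w 0 * b 0 + w 1, w 0 * b 1 + w 2, w 0 * b 2] with hW
  set V : Fin 3 → ℝ := ![v 0 * b 0 + v 1, v 0 * b 1, v 0 * b 2 + v 2] with hV
  have hWsum : ∑ i, W i = 1 := by
    simp only [hW, Fin.sum_univ_three, Matrix.cons_val_zero, Matrix.cons_val_one, Matrix.head_cons, Matrix.cons_val_two, Matrix.tail_cons]; linear_combination w 0 * hb1 + hw1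
  have hVsum : ∑ i, V i = 1 := by
    simp only [hV, Fin.sum_univ_three, Matrix.cons_val_zero, Matrix.cons_val_one, Matrix.head_cons, Matrix.cons_val_two, Matrix.tail_cons]; linear_combination v 0 * hb1 + hv1
  have hWx : ∑ i, W i • ![a₁, a₂, a₃] i = x := by
    simp only [hW, Fin.sum_univ_three, Matrix.cons_val_zero, Matrix.cons_val_one,
      Matrix.head_cons, Matrix.cons_val_two, Matrix.tail_cons]
    rw [← hwx, ← hby]
    module
  have hVx : ∑ i, V i • ![a₁, a₂, a₃] i = x := by
    simp only [hV, Fin.sum_univ_three, Matrix.cons_val_zero, Matrix.cons_val_one,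
      Matrix.head_cons, Matrix.cons_val_two, Matrix.tail_cons]
    rw [← hvx, ← hby]
    module
  have hWV : W = V := by
    rw [affineIndependent_iff_eq_of_fintype_affineCombination_eq] at h
    apply h W V hWsum hVsum
    rw [Finset.univ.affineCombination_eq_linear_combination _ _ hWsum,
      Finset.univ.affineCombination_eq_linear_combination _ _ hVsum, hWx, hVx]
  have h1 : w 0 * b 1 + w 2 = v 0 * b 1 := by
    have := congrFun hWV 1; simpa [hW, hV] using this
  have h2 : w 0 * b 2 = v 0 * b 2 + v 2 := by
    have := congrFun hWV 2; simpa [hW, hV] using this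
  -- w 2 * v 2 = -(v 0 - w 0)^2 * b 1 * b 2 ≤ 0, hence one of them is 0
  have hw2 : w 2 = (v 0 - w 0) * b 1 := by linear_combination h1
  have hv2 : v 2 = (w 0 - v 0) * b 2 := by linear_combination -h2
  have hle : w 2 * v 2 ≤ 0 := by
    rw [hw2, hv2]
    nlinarith [mul_nonneg (hb0 1) (hb0 2), sq_nonneg (v 0 - w 0)]
  have hkey : w 2 = 0 ∨ v 2 = 0 :=
    mul_eq_zero.mp (le_antisymm hle (mul_nonneg (hw0 2) (hv0 2)))
  rw [convexHull_pair]
  rcases hkey with h' | h'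
  · exact ⟨w 0, w 1, hw0 0, hw0 1, by linarith [hw1], by rw [← hwx]; rw [h']; module⟩
  · exact ⟨v 0, v 1, hv0 0, hv0 1, by linarith [hv1], by rw [← hvx]; rw [h']; module⟩
end
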